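/- arXiv:0711.4999 — 4 statements merged into one kernel-verified Lean document; each statement's English description precedes it below -/
import Mathlib

section
/- For all integers k, l ≥ 1 there exists a constant C = C(k,l) > 0 such that for every n and every red/blue colouring of the edges of the complete graph K_n, either the number of red complete subgraphs K_k is at least 2^{-k(l-2) - binom(k+1,2)} · binom(n,k) − C·n^{k-1}, or the number of blue complete subgraphs K_l is at least 2^{-l(k-2) - binom(l+1,2)} · binom(n,l) − C·n^{l-1}. -/
open Finset SimpleGraph
open scoped Nat

/-! ### Auxiliary real/binomial estimates -/

private lemma pow_sub_pow_le' (x y : ℝ) (hy : 0 ≤ y) (hxy : y ≤ x) :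
    ∀ j : ℕ, x ^ (j + 1) - y ^ (j + 1) ≤ ((j : ℝ) + 1) * (x - y) * x ^ j := by
  intro j
  induction j with
  | zero => simp
  | succ j ih =>
    have hx : 0 ≤ x := hy.trans hxy
    have h2 : y ^ (j + 1) ≤ x ^ (j + 1) := pow_le_pow_left₀ hy hxy _
    have h3 : x * (x ^ (j+1) - y ^ (j+1)) ≤ x * (((j:ℝ)+1) * (x - y) * x ^ j) :=
      mul_le_mul_of_nonneg_left ih hx
    have hid : x ^ (j+1+1) - y ^ (j+1+1) = x * (x^(j+1) - y^(j+1)) + (x - y) * y^(j+1) := by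
      ring
    have h4 : (x - y) * y^(j+1) ≤ (x - y) * x^(j+1) :=
      mul_le_mul_of_nonneg_left h2 (by linarith)
    have h5 : x * (((j:ℝ)+1) * (x - y) * x ^ j) = ((j:ℝ)+1) * (x - y) * x ^ (j+1) := by
      rw [pow_succ']; ring
    push_cast
    linarith

private lemma pow_est (t : ℕ) (ht : 1 ≤ t) (x y : ℝ) (hy : 0 ≤ y) (hyx : 2*y ≤ x)
    (hxy : x - 2*(t:ℝ) ≤ 2*y) : x ^ t ≤ (2*y) ^ t + 2*(t:ℝ)^2 * x ^ (t-1) := by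
  obtain ⟨j, rfl⟩ := Nat.exists_eq_add_of_le ht
  have h0 : (0:ℝ) ≤ 2*y := by linarith
  have h1 := pow_sub_pow_le' x (2*y) h0 hyx j
  have hx : (0:ℝ) ≤ x := h0.trans hyx
  have hxj : (0:ℝ) ≤ x ^ j := pow_nonneg hx j
  have hs : (1 + j) - 1 = j := by omega
  rw [Nat.add_comm 1 j, hs] at *
  have h2 : ((j:ℝ)+1) * (x - 2*y) * x ^ j ≤ ((j:ℝ)+1) * (2*((j:ℝ)+1)) * x ^ j := by
    apply mul_le_mul_of_nonneg_right _ hxj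
    apply mul_le_mul_of_nonneg_left _ (by positivity)
    push_cast at hxy ⊢
    linarith
  push_cast
  nlinarith

private lemma factorial_facts (t n q : ℕ) :
    ((t ! : ℝ) * (n.choose t) ≤ (n:ℝ)^t) ∧ (((q + 1 - t : ℕ) : ℝ)^t ≤ (t ! : ℝ) * (q.choose t)) := by
  constructor
  · have h : t ! * n.choose t ≤ n ^ t := by
      rw [← Nat.descFactorial_eq_factorial_mul_choose]
      exact Nat.descFactorial_le_pow n t
    exact_mod_cast h
  · have h : (q + 1 - t)^t ≤ t ! * q.choose t := by
      rw [← Nat.descFactorial_eq_factorial_mul_choose]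
      exact Nat.pow_sub_le_descFactorial q t
    exact_mod_cast h

private lemma choose_bound_blue (t q n : ℕ) (ht : 1 ≤ t) (hn : 4*t + 4 ≤ n)
    (hq1 : n ≤ 2*q + 2) (hq2 : 2*q ≤ n) :
    (n.choose t : ℝ) ≤ 2^t * (q.choose t : ℝ) + 2*(t:ℝ)^2 * (n:ℝ)^(t-1) := by
  obtain ⟨h1, h2⟩ := factorial_facts t n q
  have htq : t ≤ q + 1 := by omega
  set y : ℝ := ((q + 1 - t : ℕ) : ℝ) with hy_def
  have hycast : y = (q:ℝ) + 1 - (t:ℝ) := by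
    rw [hy_def, Nat.cast_sub htq]; push_cast; ring
  have hy0 : 0 ≤ y := by positivity
  have hkey : (n:ℝ)^t ≤ (2*y)^t + 2*(t:ℝ)^2 * (n:ℝ)^(t-1) := by
    apply pow_est t ht _ _ hy0
    · rw [hycast]
      have : (2*q : ℝ) ≤ (n:ℝ) := by exact_mod_cast hq2
      have ht1 : (1:ℝ) ≤ (t:ℝ) := by exact_mod_cast ht
      linarith
    · rw [hycast]
      have : (n:ℝ) ≤ 2*(q:ℝ) + 2 := by exact_mod_cast hq1
      linarith
  have hf1 : (1:ℝ) ≤ (t ! : ℝ) := by exact_mod_cast Nat.one_le_iff_ne_zero.mpr t.factorial_ne_zero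
  have h2y : (2*y)^t = 2^t * y^t := mul_pow 2 y t
  have h3 : 2^t * y^t ≤ 2^t * ((t ! : ℝ) * (q.choose t)) :=
    mul_le_mul_of_nonneg_left h2 (by positivity)
  have hnn : (0:ℝ) ≤ 2*(t:ℝ)^2 * (n:ℝ)^(t-1) := by positivity
  have hchain : (t ! : ℝ) * (n.choose t)
      ≤ (t ! : ℝ) * (2^t * (q.choose t : ℝ) + 2*(t:ℝ)^2 * (n:ℝ)^(t-1)) := by
    nlinarith
  exact le_of_mul_le_mul_left hchain (by positivity)

private lemma choose_bound_red (k q n : ℕ) (hk : 2 ≤ k) (hn : 4*k + 4 ≤ n)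
    (hq1 : n ≤ 2*q + 2) (hq2 : 2*q ≤ n) :
    (n.choose k : ℝ) ≤ 2^(k-1) * ((n:ℝ)/(k:ℝ)) * (q.choose (k-1) : ℝ)
      + 2*(k:ℝ)^2 * (n:ℝ)^(k-1) := by
  set t := k - 1 with ht_def
  have hkt : k = t + 1 := by omega
  have ht : 1 ≤ t := by omega
  obtain ⟨h1, -⟩ := factorial_facts k n q
  obtain ⟨-, h2⟩ := factorial_facts t q q
  have htq : t ≤ q + 1 := by omega
  set y : ℝ := ((q + 1 - t : ℕ) : ℝ) with hy_def
  have hycast : y = (q:ℝ) + 1 - (t:ℝ) := by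
    rw [hy_def, Nat.cast_sub htq]; push_cast; ring
  have hy0 : 0 ≤ y := by positivity
  have hn0 : (0:ℝ) < n := by
    have : 0 < n := by omega
    exact_mod_cast this
  have hkey : (n:ℝ)^t ≤ (2*y)^t + 2*(t:ℝ)^2 * (n:ℝ)^(t-1) := by
    apply pow_est t ht _ _ hy0
    · rw [hycast]
      have h2q : (2*q : ℝ) ≤ (n:ℝ) := by exact_mod_cast hq2
      have ht1 : (1:ℝ) ≤ (t:ℝ) := by exact_mod_cast ht
      linarith
    · rw [hycast]
      have : (n:ℝ) ≤ 2*(q:ℝ) + 2 := by exact_mod_cast hq1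
      linarith
  have hnt : (n:ℝ) * (n:ℝ)^(t-1) = (n:ℝ)^t := by
    rw [← pow_succ']
    congr 1
    omega
  have hnk : (n:ℝ)^k = (n:ℝ) * (n:ℝ)^t := by
    rw [← pow_succ', hkt]
  have hkey2 : (n:ℝ)^k ≤ (n:ℝ) * (2*y)^t + 2*(t:ℝ)^2 * (n:ℝ)^(k-1) := by
    have := mul_le_mul_of_nonneg_left hkey (le_of_lt hn0)
    rw [mul_add, ← mul_assoc] at this
    rw [hnk]
    calc (n:ℝ) * (n:ℝ)^t ≤ (n:ℝ) * (2*y)^t + (n:ℝ) * (2*(t:ℝ)^2) * (n:ℝ)^(t-1) := this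
      _ = (n:ℝ) * (2*y)^t + 2*(t:ℝ)^2 * ((n:ℝ) * (n:ℝ)^(t-1)) := by ring
      _ = (n:ℝ) * (2*y)^t + 2*(t:ℝ)^2 * (n:ℝ)^(k-1) := by rw [hnt, ← ht_def]
  have hfact : (k ! : ℝ) = (k:ℝ) * (t ! : ℝ) := by
    rw [hkt, Nat.factorial_succ]
    push_cast
    ring
  have hf1 : (1:ℝ) ≤ (t ! : ℝ) := by exact_mod_cast Nat.one_le_iff_ne_zero.mpr t.factorial_ne_zero
  have hk0 : (0:ℝ) < (k:ℝ) := by exact_mod_cast (by omega : 0 < k)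
  have h2y : (2*y)^t = 2^t * y^t := mul_pow 2 y t
  have h3 : (n:ℝ) * (2^t * y^t) ≤ (n:ℝ) * (2^t * ((t ! : ℝ) * (q.choose t))) := by
    apply mul_le_mul_of_nonneg_left _ (le_of_lt hn0)
    exact mul_le_mul_of_nonneg_left h2 (by positivity)
  have hrhs : (k ! : ℝ) * (2^(k-1) * ((n:ℝ)/(k:ℝ)) * (q.choose (k-1) : ℝ) + 2*(k:ℝ)^2 * (n:ℝ)^(k-1))
      = 2^t * (n:ℝ) * (t ! : ℝ) * (q.choose t : ℝ) + (k ! : ℝ) * (2*(k:ℝ)^2 * (n:ℝ)^(k-1)) := by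
    rw [hfact, ← ht_def]
    field_simp
  have hchain : (k ! : ℝ) * (n.choose k) ≤ (k ! : ℝ)
      * (2^(k-1) * ((n:ℝ)/(k:ℝ)) * (q.choose (k-1) : ℝ) + 2*(k:ℝ)^2 * (n:ℝ)^(k-1)) := by
    rw [hrhs]
    have htk : (t:ℝ)^2 ≤ (k:ℝ)^2 := by
      have : (t:ℝ) ≤ (k:ℝ) := by exact_mod_cast (by omega : t ≤ k)
      nlinarith [show (0:ℝ) ≤ (t:ℝ) from by positivity]
    have hkfact : (1:ℝ) ≤ (k ! : ℝ) := by
      exact_mod_cast Nat.one_le_iff_ne_zero.mpr k.factorial_ne_zero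
    have hpw : (0:ℝ) ≤ (n:ℝ)^(k-1) := by positivity
    have e1 : 2*(t:ℝ)^2*(n:ℝ)^(k-1) ≤ 2*(k:ℝ)^2*(n:ℝ)^(k-1) := by nlinarith
    have e2 : 2*(k:ℝ)^2*(n:ℝ)^(k-1) ≤ (k ! : ℝ)*(2*(k:ℝ)^2*(n:ℝ)^(k-1)) :=
      le_mul_of_one_le_left (by positivity) hkfact
    calc (k ! : ℝ) * (n.choose k) ≤ (n:ℝ)^k := h1
      _ ≤ (n:ℝ)*(2*y)^t + 2*(t:ℝ)^2*(n:ℝ)^(k-1) := hkey2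
      _ = (n:ℝ)*(2^t*y^t) + 2*(t:ℝ)^2*(n:ℝ)^(k-1) := by rw [h2y]
      _ ≤ (n:ℝ)*(2^t*((t ! : ℝ)*(q.choose t))) + 2*(t:ℝ)^2*(n:ℝ)^(k-1) := by linarith [h3]
      _ = 2^t*(n:ℝ)*(t ! : ℝ)*(q.choose t) + 2*(t:ℝ)^2*(n:ℝ)^(k-1) := by ring
      _ ≤ 2^t*(n:ℝ)*(t ! : ℝ)*(q.choose t) + (k ! : ℝ)*(2*(k:ℝ)^2*(n:ℝ)^(k-1)) := by
          linarith
  exact le_of_mul_le_mul_left hchain (by positivity)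

/-! ### The coefficient `alphaR` -/

noncomputable def alphaR (k l : ℕ) : ℝ :=
  (2 : ℝ) ^ (-((k : ℤ) * ((l : ℤ) - 2)) - ((k + 1).choose 2 : ℤ))

private lemma alphaR_pos (k l : ℕ) : 0 < alphaR k l := by
  unfold alphaR; positivity

private lemma choose_two_succ (k : ℕ) : (k + 2).choose 2 = (k + 1) + (k + 1).choose 2 := by
  rw [Nat.choose_succ_succ (k+1) 1, Nat.choose_one_right]

private lemma alphaR_le_one {k l : ℕ} (hk : 1 ≤ k) (hl : 1 ≤ l) : alphaR k l ≤ 1 := by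
  unfold alphaR
  apply zpow_le_one_of_nonpos₀ (by norm_num)
  have h1 : (k : ℤ) ≤ ((k + 1).choose 2 : ℤ) := by
    have : k ≤ (k+1).choose 2 := by
      obtain ⟨k', rfl⟩ := Nat.exists_eq_add_of_le hk
      rw [Nat.add_comm 1 k']
      rw [choose_two_succ]
      omega
    exact_mod_cast this
  have h2 : -(k : ℤ) ≤ (k : ℤ) * ((l : ℤ) - 2) := by
    have hl' : (1 : ℤ) ≤ (l : ℤ) := by exact_mod_cast hl
    nlinarith [show (0:ℤ) ≤ (k:ℤ) from by positivity]
  linarith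

private lemma alphaR_succ (k l : ℕ) :
    alphaR (k + 1) l = alphaR k l * (2 : ℝ) ^ (-((l : ℤ) - 2) - (k + 1 : ℤ)) := by
  unfold alphaR
  rw [← zpow_add₀ (by norm_num : (2:ℝ) ≠ 0)]
  congr 1
  rw [show k + 1 + 1 = k + 2 from rfl, choose_two_succ]
  push_cast
  ring

private lemma alphaR_snd_succ (k l : ℕ) :
    alphaR k (l + 1) = alphaR k l * (2 : ℝ) ^ (-(k : ℤ)) := by
  unfold alphaR
  rw [← zpow_add₀ (by norm_num : (2:ℝ) ≠ 0)]
  congr 1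
  push_cast
  ring

/-! ### Clique counting -/

/-- The number of complete subgraphs of order `t` in `G` (as sets of vertices). -/
noncomputable def cliqueCount {n : ℕ} (G : SimpleGraph (Fin n)) (t : ℕ) : ℕ :=
  {s : Finset (Fin n) | G.IsNClique t s}.ncard

private lemma cliqueCount_eq {n : ℕ} (G : SimpleGraph (Fin n)) [DecidableRel G.Adj] (t : ℕ) :
    cliqueCount G t = (G.cliqueFinset t).card := by
  rw [cliqueCount, ← Set.ncard_coe_finset]
  congr 1
  ext s
  simp [SimpleGraph.mem_cliqueFinset_iff]

private lemma cliqueCount_one {n : ℕ} (G : SimpleGraph (Fin n)) : cliqueCount G 1 = n := by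
  classical
  rw [cliqueCount_eq]
  have : G.cliqueFinset 1 = univ.map ⟨fun v => {v}, fun a b h => by simpa using h⟩ := by
    ext s
    simp only [SimpleGraph.mem_cliqueFinset_iff, SimpleGraph.isNClique_one, Finset.mem_map,
      Finset.mem_univ, true_and, Function.Embedding.coeFn_mk]
    exact ⟨fun ⟨a, h⟩ => ⟨a, h.symm⟩, fun ⟨a, h⟩ => ⟨a, h.symm⟩⟩
  rw [this, Finset.card_map, Finset.card_univ, Fintype.card_fin]

private lemma comap_compl' {α β : Type*} (G : SimpleGraph β) (f : α → β)
    (hf : Function.Injective f) : (G.comap f)ᶜ = Gᶜ.comap f := by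
  ext a b
  simp [SimpleGraph.compl_adj, hf.ne_iff]

private lemma isNClique_map_of_comap {α β : Type*} {G : SimpleGraph β} (f : α ↪ β) {t : ℕ}
    {c : Finset α} (hc : (G.comap f).IsNClique t c) : G.IsNClique t (c.map f) := by
  obtain ⟨h1, h2⟩ := hc
  refine ⟨?_, by simp [h2]⟩
  intro x hx y hy hxy
  simp only [Finset.coe_map, Set.mem_image, Finset.mem_coe] at hx hy
  obtain ⟨a, ha, rfl⟩ := hx
  obtain ⟨b, hb, rfl⟩ := hy
  exact h1 ha hb (fun h => hxy (by rw [h]))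

private lemma cliqueCount_comap_le_filter {m n : ℕ} (G : SimpleGraph (Fin n))
    [DecidableRel G.Adj] (s : Finset (Fin n)) (h : s.card = m) (t : ℕ) :
    cliqueCount (G.comap (s.orderEmbOfFin h)) t
      ≤ ((G.cliqueFinset t).filter (· ⊆ s)).card := by
  classical
  rw [cliqueCount_eq]
  apply Finset.card_le_card_of_injOn (fun c => c.map (s.orderEmbOfFin h).toEmbedding)
  · intro c hc
    simp only [Finset.mem_coe] at hc ⊢
    rw [SimpleGraph.mem_cliqueFinset_iff] at hc
    rw [Finset.mem_filter, SimpleGraph.mem_cliqueFinset_iff]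
    refine ⟨isNClique_map_of_comap _ hc, ?_⟩
    intro x hx
    obtain ⟨a, _, rfl⟩ := Finset.mem_map.mp hx
    exact s.orderEmbOfFin_mem h a
  · intro c _ d _ hcd
    exact Finset.map_injective _ hcd

private lemma cliqueCount_comap_le {m n : ℕ} (G : SimpleGraph (Fin n))
    [DecidableRel G.Adj] (s : Finset (Fin n)) (h : s.card = m) (t : ℕ) :
    cliqueCount (G.comap (s.orderEmbOfFin h)) t ≤ cliqueCount G t := by
  classical
  refine (cliqueCount_comap_le_filter G s h t).trans ?_
  rw [cliqueCount_eq]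
  exact Finset.card_le_card (Finset.filter_subset _ _)

private lemma sum_filter_le {n k : ℕ} (hk : 1 ≤ k) (G : SimpleGraph (Fin n))
    [DecidableRel G.Adj] (A : Finset (Fin n)) :
    ∑ v ∈ A, ((G.cliqueFinset (k-1)).filter (· ⊆ G.neighborFinset v)).card
      ≤ k * (G.cliqueFinset k).card := by
  classical
  rw [← Finset.card_sigma]
  set P := A.sigma (fun v => (G.cliqueFinset (k-1)).filter (· ⊆ G.neighborFinset v)) with hP
  have hmap : ∀ p ∈ P, (insert p.1 p.2 : Finset (Fin n)) ∈ G.cliqueFinset k := by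
    rintro ⟨v, c⟩ hp
    rw [hP, Finset.mem_sigma, Finset.mem_filter, SimpleGraph.mem_cliqueFinset_iff] at hp
    obtain ⟨-, hc, hsub⟩ := hp
    rw [SimpleGraph.mem_cliqueFinset_iff]
    have : G.IsNClique ((k-1)+1) (insert v c) := by
      apply hc.insert
      intro b hb
      exact (G.mem_neighborFinset v b).mp (hsub hb)
    rwa [show k - 1 + 1 = k by omega] at this
  rw [Finset.card_eq_sum_card_fiberwise hmap]
  have hfib : ∀ T ∈ G.cliqueFinset k,
      (P.filter (fun p => (insert p.1 p.2 : Finset (Fin n)) = T)).card ≤ k := by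
    intro T hT
    rw [SimpleGraph.mem_cliqueFinset_iff] at hT
    have : (P.filter (fun p => (insert p.1 p.2 : Finset (Fin n)) = T)).card ≤ T.card := by
      apply Finset.card_le_card_of_injOn (fun p => p.1)
      · rintro ⟨v, c⟩ hp
        simp only [Finset.mem_coe] at hp ⊢
        rw [Finset.mem_filter] at hp
        exact hp.2 ▸ Finset.mem_insert_self v c
      · rintro ⟨v, c⟩ hp ⟨w, d⟩ hq (h1 : v = w)
        subst h1
        simp only [Finset.mem_coe] at hp hq
        rw [Finset.mem_filter, hP, Finset.mem_sigma, Finset.mem_filter] at hp hq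
        obtain ⟨⟨-, -, hc⟩, hic⟩ := hp
        obtain ⟨⟨-, -, hd⟩, hid⟩ := hq
        have hvc : v ∉ c := fun h => G.notMem_neighborFinset_self v (hc h)
        have hvd : v ∉ d := fun h => G.notMem_neighborFinset_self v (hd h)
        have hcd : c = d := by
          have h : insert v c = insert v d := hic.trans hid.symm
          calc c = (insert v c).erase v := (Finset.erase_insert hvc).symm
            _ = (insert v d).erase v := by rw [h]
            _ = d := Finset.erase_insert hvd
        simp [hcd]
    simpa [hT.2] using this
  calc ∑ T ∈ G.cliqueFinset k,
        (P.filter (fun p => (insert p.1 p.2 : Finset (Fin n)) = T)).card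
      ≤ ∑ _T ∈ G.cliqueFinset k, k := Finset.sum_le_sum hfib
    _ = k * (G.cliqueFinset k).card := by rw [Finset.sum_const, smul_eq_mul, mul_comm]

/-! ### The main induction -/

def goodC (k l : ℕ) (C : ℝ) : Prop :=
  ∀ (n : ℕ) (G : SimpleGraph (Fin n)),
    (alphaR k l * (n.choose k : ℝ) - C * (n : ℝ) ^ (k - 1) ≤ (cliqueCount G k : ℝ)) ∨
    (alphaR l k * (n.choose l : ℝ) - C * (n : ℝ) ^ (l - 1) ≤ (cliqueCount Gᶜ l : ℝ))

private lemma div_trick {kR u R p : ℝ} (hk : 1 ≤ kR) (hp : 0 ≤ p)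
    (h : kR * u - p ≤ kR * R) : u - p ≤ R := by
  rcases le_or_gt u R with h' | h'
  · linarith
  · nlinarith [mul_le_mul_of_nonneg_left (le_of_lt (sub_pos.mpr h')) (by linarith : (0:ℝ) ≤ kR - 1)]

private lemma core {k l : ℕ} (hk : 2 ≤ k) (hl : 2 ≤ l) {C₁ : ℝ} (hC₁ : 0 < C₁)
    (h1 : goodC (k-1) l C₁) (n : ℕ) (G : SimpleGraph (Fin n)) [DecidableRel G.Adj]
    (hn : 4*k + 4*l + 4 ≤ n) (A : Finset (Fin n)) (hA2 : n ≤ 2 * A.card)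
    (hA : ∀ v ∈ A, (n-1)/2 ≤ G.degree v) :
    (alphaR k l * (n.choose k : ℝ) - (C₁ + 2*(k:ℝ)^2 + 2*(l:ℝ)^2) * (n:ℝ)^(k-1)
        ≤ (cliqueCount G k : ℝ)) ∨
    (alphaR l k * (n.choose l : ℝ) - (C₁ + 2*(k:ℝ)^2 + 2*(l:ℝ)^2) * (n:ℝ)^(l-1)
        ≤ (cliqueCount Gᶜ l : ℝ)) := by
  classical
  set q : ℕ := (n-1)/2 with hq
  have hq1 : n ≤ 2*q + 2 := by omega
  have hq2 : 2*q ≤ n := by omega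
  set H := fun v : Fin n =>
    G.comap ⇑((G.neighborFinset v).orderEmbOfFin (G.card_neighborFinset_eq_degree v)) with hH
  have hdn : ∀ v : Fin n, G.degree v ≤ n := by
    intro v
    have := G.degree_lt_card_verts v
    rw [Fintype.card_fin] at this
    omega
  have hpow_nonneg : (0:ℝ) ≤ (n:ℝ)^(l-1) := by positivity
  have hpow_nonneg' : (0:ℝ) ≤ (n:ℝ)^(k-1) := by positivity
  by_cases hblue : ∃ v ∈ A,
      alphaR l (k-1) * (((G.degree v).choose l : ℕ) : ℝ)
        - C₁ * ((G.degree v : ℕ) : ℝ)^(l-1) ≤ (cliqueCount (H v)ᶜ l : ℝ)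
  · -- blue case
    right
    obtain ⟨v, hvA, hb⟩ := hblue
    have hdq : q ≤ G.degree v := hA v hvA
    have hcc : cliqueCount (H v)ᶜ l ≤ cliqueCount Gᶜ l := by
      rw [hH]
      rw [comap_compl' G _ (((G.neighborFinset v).orderEmbOfFin
        (G.card_neighborFinset_eq_degree v)).injective)]
      exact cliqueCount_comap_le Gᶜ _ _ l
    -- α l (k-1) = α l k * 2^l
    have hsnd : alphaR l k = alphaR l (k-1) * (2:ℝ)^(-(l:ℤ)) := by
      conv_lhs => rw [show k = (k-1)+1 by omega]
      exact alphaR_snd_succ l (k-1)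
    have h2l : ((2:ℝ)^(-(l:ℤ))) * (2:ℝ)^(l:ℕ) = 1 := by
      rw [← zpow_natCast (2:ℝ) l, ← zpow_add₀ (by norm_num : (2:ℝ) ≠ 0)]
      simp
    have halk : alphaR l (k-1) = alphaR l k * (2:ℝ)^(l:ℕ) := by
      rw [hsnd, mul_assoc, h2l, mul_one]
    have b1 : alphaR l k * ((n.choose l : ℕ) : ℝ)
        ≤ alphaR l k * (2^l * (q.choose l : ℝ)) + alphaR l k * (2*(l:ℝ)^2 * (n:ℝ)^(l-1)) := by
      have := mul_le_mul_of_nonneg_left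
        (choose_bound_blue l q n (by omega) (by omega) hq1 hq2) (alphaR_pos l k).le
      rw [mul_add] at this
      exact this
    have b2 : alphaR l k * (2^l * (q.choose l : ℝ)) = alphaR l (k-1) * (q.choose l : ℝ) := by
      rw [halk]; ring
    have b3 : alphaR l (k-1) * ((q.choose l : ℕ) : ℝ)
        ≤ alphaR l (k-1) * (((G.degree v).choose l : ℕ) : ℝ) := by
      apply mul_le_mul_of_nonneg_left _ (alphaR_pos l (k-1)).le
      exact_mod_cast Nat.choose_le_choose l hdq
    have b4 : alphaR l k * (2*(l:ℝ)^2 * (n:ℝ)^(l-1)) ≤ 2*(l:ℝ)^2 * (n:ℝ)^(l-1) := by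
      apply mul_le_of_le_one_left (by positivity)
      exact alphaR_le_one (by omega) (by omega)
    have b5 : C₁ * ((G.degree v : ℕ) : ℝ)^(l-1) ≤ C₁ * (n:ℝ)^(l-1) := by
      apply mul_le_mul_of_nonneg_left _ hC₁.le
      apply pow_le_pow_left₀ (by positivity)
      exact_mod_cast hdn v
    have b6 : (cliqueCount (H v)ᶜ l : ℝ) ≤ (cliqueCount Gᶜ l : ℝ) := by exact_mod_cast hcc
    have hkk : (0:ℝ) ≤ 2*(k:ℝ)^2 * (n:ℝ)^(l-1) := by positivity
    rw [b2] at b1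
    nlinarith [b1, b3, b4, b5, b6, hb]
  · -- red case
    left
    push_neg at hblue
    have hred : ∀ v ∈ A,
        alphaR (k-1) l * (((G.degree v).choose (k-1) : ℕ) : ℝ)
          - C₁ * ((G.degree v : ℕ) : ℝ)^((k-1)-1) ≤ (cliqueCount (H v) (k-1) : ℝ) := by
      intro v hv
      rcases h1 (G.degree v) (H v) with h | h
      · exact h
      · exact absurd h (by exact_mod_cast (hblue v hv).not_ge)
    -- per-vertex lower bound with uniform quantities
    have hper : ∀ v ∈ A,
        alphaR (k-1) l * ((q.choose (k-1) : ℕ) : ℝ) - C₁ * (n:ℝ)^((k-1)-1)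
          ≤ (cliqueCount (H v) (k-1) : ℝ) := by
      intro v hv
      refine le_trans ?_ (hred v hv)
      have m1 : alphaR (k-1) l * ((q.choose (k-1) : ℕ) : ℝ)
          ≤ alphaR (k-1) l * (((G.degree v).choose (k-1) : ℕ) : ℝ) := by
        apply mul_le_mul_of_nonneg_left _ (alphaR_pos (k-1) l).le
        exact_mod_cast Nat.choose_le_choose (k-1) (hA v hv)
      have m2 : C₁ * ((G.degree v : ℕ) : ℝ)^((k-1)-1) ≤ C₁ * (n:ℝ)^((k-1)-1) := by
        apply mul_le_mul_of_nonneg_left _ hC₁.le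
        apply pow_le_pow_left₀ (by positivity)
        exact_mod_cast hdn v
      linarith
    -- summation
    have S1 : ∑ v ∈ A, cliqueCount (H v) (k-1) ≤ k * cliqueCount G k := by
      calc ∑ v ∈ A, cliqueCount (H v) (k-1)
          ≤ ∑ v ∈ A, ((G.cliqueFinset (k-1)).filter (· ⊆ G.neighborFinset v)).card :=
            Finset.sum_le_sum (fun v _ => cliqueCount_comap_le_filter G _ _ (k-1))
        _ ≤ k * (G.cliqueFinset k).card := sum_filter_le (by omega) G A
        _ = k * cliqueCount G k := by rw [cliqueCount_eq]
    have S2 : (A.card : ℝ) * (alphaR (k-1) l * ((q.choose (k-1) : ℕ) : ℝ)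
        - C₁ * (n:ℝ)^((k-1)-1)) ≤ (k:ℝ) * (cliqueCount G k : ℝ) := by
      have hs : (A.card : ℝ) * (alphaR (k-1) l * ((q.choose (k-1) : ℕ) : ℝ)
          - C₁ * (n:ℝ)^((k-1)-1)) ≤ ∑ v ∈ A, (cliqueCount (H v) (k-1) : ℝ) := by
        have := Finset.card_nsmul_le_sum A (fun v => (cliqueCount (H v) (k-1) : ℝ))
          (alphaR (k-1) l * ((q.choose (k-1) : ℕ) : ℝ) - C₁ * (n:ℝ)^((k-1)-1)) hper
        rwa [nsmul_eq_mul] at this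
      have hsum : ∑ v ∈ A, (cliqueCount (H v) (k-1) : ℝ)
          = ((∑ v ∈ A, cliqueCount (H v) (k-1) : ℕ) : ℝ) := by push_cast; ring
      have hS1 : ((∑ v ∈ A, cliqueCount (H v) (k-1) : ℕ) : ℝ)
          ≤ (k:ℝ) * (cliqueCount G k : ℝ) := by exact_mod_cast S1
      rw [hsum] at hs
      linarith
    -- |A| ≥ n/2, |A| ≤ n
    have hAn : (A.card : ℝ) ≤ n := by
      have := A.card_le_univ
      rw [Fintype.card_fin] at this
      exact_mod_cast this
    have hA2' : (n:ℝ) ≤ 2 * (A.card : ℝ) := by exact_mod_cast hA2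
    have hpow1 : (n:ℝ) * (n:ℝ)^((k-1)-1) = (n:ℝ)^(k-1) := by
      rw [← pow_succ']
      congr 1
      omega
    have hx : (0:ℝ) ≤ alphaR (k-1) l * ((q.choose (k-1) : ℕ) : ℝ) :=
      mul_nonneg (alphaR_pos (k-1) l).le (by positivity)
    have hy : (0:ℝ) ≤ C₁ * (n:ℝ)^((k-1)-1) := by positivity
    -- (n/2) x - C₁ n^{k-1} ≤ k red
    have S3 : (n:ℝ)/2 * (alphaR (k-1) l * ((q.choose (k-1) : ℕ) : ℝ)) - C₁ * (n:ℝ)^(k-1)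
        ≤ (k:ℝ) * (cliqueCount G k : ℝ) := by
      have e1 : (n:ℝ)/2 * (alphaR (k-1) l * ((q.choose (k-1) : ℕ) : ℝ))
          ≤ (A.card : ℝ) * (alphaR (k-1) l * ((q.choose (k-1) : ℕ) : ℝ)) := by
        apply mul_le_mul_of_nonneg_right _ hx
        linarith
      have e2 : (A.card : ℝ) * (C₁ * (n:ℝ)^((k-1)-1)) ≤ (n:ℝ) * (C₁ * (n:ℝ)^((k-1)-1)) :=
        mul_le_mul_of_nonneg_right hAn hy
      have e3 : (n:ℝ) * (C₁ * (n:ℝ)^((k-1)-1)) = C₁ * (n:ℝ)^(k-1) := by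
        rw [← hpow1]; ring
      rw [mul_sub] at S2
      linarith
    -- coefficient comparison
    have hk1 : (1:ℕ) ≤ k - 1 := by omega
    have t1 : alphaR k l ≤ alphaR (k-1) l * (2:ℝ)^(-(k:ℤ)) := by
      have : alphaR k l = alphaR (k-1) l * (2:ℝ)^(-((l:ℤ)-2) - ((k-1:ℕ)+1 : ℤ)) := by
        conv_lhs => rw [show k = (k-1)+1 by omega]
        exact alphaR_succ (k-1) l
      rw [this]
      apply mul_le_mul_of_nonneg_left _ (alphaR_pos (k-1) l).le
      apply zpow_le_zpow_right₀ (by norm_num : (1:ℝ) ≤ 2)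
      have : (2:ℤ) ≤ (l:ℤ) := by exact_mod_cast hl
      have hcast : ((k-1:ℕ) : ℤ) = (k:ℤ) - 1 := by
        rw [Nat.cast_sub (by omega : 1 ≤ k)]
        simp
      rw [hcast]
      linarith
    have hzp : (2:ℝ)^(-(k:ℤ)) * (2:ℝ)^((k-1 : ℕ)) = 1/2 := by
      rw [← zpow_natCast (2:ℝ) (k-1), ← zpow_add₀ (by norm_num : (2:ℝ) ≠ 0)]
      have hcast : ((k-1:ℕ) : ℤ) = (k:ℤ) - 1 := by
        rw [Nat.cast_sub (by omega : 1 ≤ k)]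
        simp
      rw [hcast, show -(k:ℤ) + ((k:ℤ) - 1) = -1 by ring]
      norm_num
    have hk0 : (0:ℝ) < (k:ℝ) := by exact_mod_cast (by omega : 0 < k)
    -- alphaR k l * choose n k ≤ alphaR (k-1) l * (n/(2k)) * choose q (k-1) + 2k^2 n^{k-1}
    have t2 : alphaR k l * ((n.choose k : ℕ) : ℝ)
        ≤ alphaR (k-1) l * ((n:ℝ)/(2*(k:ℝ))) * ((q.choose (k-1) : ℕ) : ℝ)
          + 2*(k:ℝ)^2 * (n:ℝ)^(k-1) := by
      have hcb := choose_bound_red k q n hk (by omega) hq1 hq2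
      have step1 : alphaR k l * ((n.choose k : ℕ) : ℝ)
          ≤ (alphaR (k-1) l * (2:ℝ)^(-(k:ℤ))) * ((n.choose k : ℕ) : ℝ) :=
        mul_le_mul_of_nonneg_right t1 (by positivity)
      have step2 : (alphaR (k-1) l * (2:ℝ)^(-(k:ℤ))) * ((n.choose k : ℕ) : ℝ)
          ≤ (alphaR (k-1) l * (2:ℝ)^(-(k:ℤ)))
            * (2^(k-1) * ((n:ℝ)/(k:ℝ)) * (q.choose (k-1) : ℝ) + 2*(k:ℝ)^2 * (n:ℝ)^(k-1)) := by
        apply mul_le_mul_of_nonneg_left hcb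
        exact mul_nonneg (alphaR_pos _ _).le (by positivity)
      have step3 : (alphaR (k-1) l * (2:ℝ)^(-(k:ℤ)))
            * (2^(k-1) * ((n:ℝ)/(k:ℝ)) * (q.choose (k-1) : ℝ))
          = alphaR (k-1) l * ((n:ℝ)/(2*(k:ℝ))) * ((q.choose (k-1) : ℕ) : ℝ) := by
        have hhalf : (n:ℝ)/(2*(k:ℝ)) = 1/2 * ((n:ℝ)/(k:ℝ)) := by ring
        calc (alphaR (k-1) l * (2:ℝ)^(-(k:ℤ)))
              * (2^(k-1) * ((n:ℝ)/(k:ℝ)) * (q.choose (k-1) : ℝ))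
            = alphaR (k-1) l * (((2:ℝ)^(-(k:ℤ)) * (2:ℝ)^((k-1:ℕ)))
                * (((n:ℝ)/(k:ℝ)) * (q.choose (k-1) : ℝ))) := by ring
          _ = alphaR (k-1) l * ((1/2) * (((n:ℝ)/(k:ℝ)) * (q.choose (k-1) : ℝ))) := by
              rw [hzp]
          _ = alphaR (k-1) l * ((n:ℝ)/(2*(k:ℝ))) * ((q.choose (k-1) : ℕ) : ℝ) := by
              rw [hhalf]; ring
      have step4 : (alphaR (k-1) l * (2:ℝ)^(-(k:ℤ))) * (2*(k:ℝ)^2 * (n:ℝ)^(k-1))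
          ≤ 2*(k:ℝ)^2 * (n:ℝ)^(k-1) := by
        apply mul_le_of_le_one_left (by positivity)
        calc alphaR (k-1) l * (2:ℝ)^(-(k:ℤ)) ≤ 1 * 1 := by
              apply mul_le_mul (alphaR_le_one hk1 (by omega)) _ (by positivity) (by norm_num)
              apply zpow_le_one_of_nonpos₀ (by norm_num)
              omega
          _ = 1 := by norm_num
      rw [mul_add] at step2
      rw [step3] at step2
      linarith
    -- divide S3 by k
    have S4 : alphaR (k-1) l * ((n:ℝ)/(2*(k:ℝ))) * ((q.choose (k-1) : ℕ) : ℝ)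
        - C₁ * (n:ℝ)^(k-1) ≤ (cliqueCount G k : ℝ) := by
      set u : ℝ := alphaR (k-1) l * ((n:ℝ)/(2*(k:ℝ))) * ((q.choose (k-1) : ℕ) : ℝ) with hu_def
      set R : ℝ := (cliqueCount G k : ℝ) with hR_def
      have hkne : (k:ℝ) ≠ 0 := ne_of_gt hk0
      have hdivk : (n:ℝ)/(2*(k:ℝ)) * (k:ℝ) = (n:ℝ)/2 := by field_simp
      have hu : (k:ℝ) * u = (n:ℝ)/2 * (alphaR (k-1) l * ((q.choose (k-1) : ℕ) : ℝ)) := by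
        rw [hu_def]
        calc (k:ℝ) * (alphaR (k-1) l * ((n:ℝ)/(2*(k:ℝ))) * ((q.choose (k-1) : ℕ) : ℝ))
            = alphaR (k-1) l * ((n:ℝ)/(2*(k:ℝ)) * (k:ℝ)) * ((q.choose (k-1) : ℕ) : ℝ) := by
              ring
          _ = (n:ℝ)/2 * (alphaR (k-1) l * ((q.choose (k-1) : ℕ) : ℝ)) := by rw [hdivk]; ring
      have hk1r : (1:ℝ) ≤ (k:ℝ) := by exact_mod_cast (by omega : 1 ≤ k)
      have hCp : (0:ℝ) ≤ C₁ * (n:ℝ)^(k-1) := mul_nonneg hC₁.le hpow_nonneg'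
      have hkuR : (k:ℝ) * u - C₁ * (n:ℝ)^(k-1) ≤ (k:ℝ) * R := by
        rw [hu]; exact S3
      exact div_trick hk1r hCp hkuR
    have hl2 : (0:ℝ) ≤ 2*(l:ℝ)^2*(n:ℝ)^(k-1) := by positivity
    linarith [t2, S4]

private lemma trivial_bound {k l : ℕ} (hk : 1 ≤ k) (hl : 1 ≤ l) {C : ℝ} (n : ℕ)
    (G : SimpleGraph (Fin n)) (hC : (n:ℝ) < C) :
    alphaR k l * (n.choose k : ℝ) - C * (n : ℝ) ^ (k - 1) ≤ (cliqueCount G k : ℝ) := by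
  have h0 : (0:ℝ) ≤ (cliqueCount G k : ℝ) := by positivity
  rcases Nat.eq_zero_or_pos n with rfl | hn
  · have hC0 : (0:ℝ) < C := by
      have : ((0:ℕ):ℝ) < C := hC
      simpa using this
    have hch : Nat.choose 0 k = 0 := Nat.choose_eq_zero_of_lt (by omega)
    rw [hch]
    push_cast
    have hx : (0:ℝ) ≤ (0:ℝ)^(k-1) := pow_nonneg le_rfl _
    nlinarith
  · have hchoose : (n.choose k : ℝ) ≤ (n:ℝ)^k := by exact_mod_cast Nat.choose_le_pow n k
    have hpowk : (n:ℝ)^k = (n:ℝ) * (n:ℝ)^(k-1) := by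
      rw [← pow_succ']
      congr 1
      omega
    have ha1 : alphaR k l ≤ 1 := alphaR_le_one hk hl
    have ha0 : 0 < alphaR k l := alphaR_pos k l
    have hp : (0:ℝ) ≤ (n:ℝ)^(k-1) := by positivity
    have hch : (0:ℝ) ≤ (n.choose k : ℝ) := by positivity
    have : alphaR k l * (n.choose k : ℝ) ≤ (n:ℝ) * (n:ℝ)^(k-1) := by
      calc alphaR k l * (n.choose k : ℝ) ≤ 1 * (n.choose k : ℝ) :=
          mul_le_mul_of_nonneg_right ha1 hch
        _ = (n.choose k : ℝ) := by ring
        _ ≤ (n:ℝ)^k := hchoose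
        _ = (n:ℝ) * (n:ℝ)^(k-1) := hpowk
    nlinarith [mul_le_mul_of_nonneg_right hC.le hp]

private lemma main_induction : ∀ m k l : ℕ, k + l ≤ m → 1 ≤ k → 1 ≤ l →
    ∃ C : ℝ, 0 < C ∧ goodC k l C := by
  intro m
  induction m with
  | zero => intro k l h hk hl; omega
  | succ m ih =>
    intro k l hm hk hl
    -- base cases
    rcases eq_or_lt_of_le hk with hk1 | hk2
    · refine ⟨1, by norm_num, ?_⟩
      intro n G
      left
      subst hk1
      have := cliqueCount_one G
      rw [Nat.choose_one_right]
      have h1 : alphaR 1 l ≤ 1 := alphaR_le_one le_rfl hl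
      have h0 : 0 < alphaR 1 l := alphaR_pos 1 l
      rw [this]
      simp only [Nat.sub_self, pow_zero, mul_one]
      nlinarith [(show (0:ℝ) ≤ (n:ℝ) by positivity)]
    · rcases eq_or_lt_of_le hl with hl1 | hl2
      · refine ⟨1, by norm_num, ?_⟩
        intro n G
        right
        subst hl1
        have := cliqueCount_one Gᶜ
        rw [Nat.choose_one_right]
        have h1 : alphaR 1 k ≤ 1 := alphaR_le_one le_rfl hk
        have h0 : 0 < alphaR 1 k := alphaR_pos 1 k
        rw [this]
        simp only [Nat.sub_self, pow_zero, mul_one]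
        nlinarith [(show (0:ℝ) ≤ (n:ℝ) by positivity)]
      · -- k, l ≥ 2
        have hk2' : 2 ≤ k := hk2
        have hl2' : 2 ≤ l := hl2
        obtain ⟨C₁, hC₁, h1⟩ := ih (k-1) l (by omega) (by omega) hl
        obtain ⟨C₂, hC₂, h2⟩ := ih (l-1) k (by omega) (by omega) hk
        set Cf : ℝ := C₁ + C₂ + 2*(k:ℝ)^2 + 2*(l:ℝ)^2 + (4*(k:ℝ) + 4*(l:ℝ) + 5) with hCf
        have hCfpos : 0 < Cf := by positivity
        refine ⟨Cf, hCfpos, ?_⟩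
        intro n G
        classical
        by_cases hsmall : n < 4*k + 4*l + 5
        · left
          apply trivial_bound hk hl n G
          rw [hCf]
          have : (n:ℝ) < 4*(k:ℝ) + 4*(l:ℝ) + 5 := by exact_mod_cast hsmall
          nlinarith
        · push_neg at hsmall
          have hn : 4*k + 4*l + 4 ≤ n := by omega
          set q : ℕ := (n-1)/2 with hq
          set A : Finset (Fin n) := univ.filter (fun v => q ≤ G.degree v) with hA
          set B : Finset (Fin n) := univ.filter (fun v => q ≤ Gᶜ.degree v) with hB
          have hunion : ∀ v : Fin n, v ∈ A ∪ B := by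
            intro v
            have hdeg : G.degree v + Gᶜ.degree v = n - 1 := by
              have := G.degree_compl v   -- Gᶜ.degree v = card - 1 - G.degree v
              rw [Fintype.card_fin] at this
              have hlt := G.degree_lt_card_verts v
              rw [Fintype.card_fin] at hlt
              omega
            rw [Finset.mem_union, hA, hB, Finset.mem_filter, Finset.mem_filter]
            simp only [Finset.mem_univ, true_and]
            omega
          have hcard : n ≤ A.card + B.card := by
            have : (univ : Finset (Fin n)).card ≤ (A ∪ B).card := by
              apply Finset.card_le_card
              intro v _
              exact hunion v
            rw [Finset.card_univ, Fintype.card_fin] at this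
            exact le_trans this (Finset.card_union_le A B)
          by_cases hAbig : n ≤ 2 * A.card
          · have hcore := core hk2' hl2' hC₁ h1 n G hn A hAbig
              (by
                intro v hv
                rw [hA, Finset.mem_filter] at hv
                exact hv.2)
            rcases hcore with h | h
            · left
              refine le_trans (by nlinarith [(show (0:ℝ) ≤ (n:ℝ)^(k-1) by positivity),
                hC₂.le, (show (0:ℝ) ≤ 4*(k:ℝ) + 4*(l:ℝ) + 5 by positivity)]) h
            · right
              refine le_trans (by nlinarith [(show (0:ℝ) ≤ (n:ℝ)^(l-1) by positivity),
                hC₂.le, (show (0:ℝ) ≤ 4*(k:ℝ) + 4*(l:ℝ) + 5 by positivity)]) h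
          · have hBbig : n ≤ 2 * B.card := by omega
            have hcore := core hl2' hk2' hC₂ h2 n Gᶜ (by omega) B hBbig
              (by
                intro v hv
                rw [hB, Finset.mem_filter] at hv
                exact hv.2)
            rcases hcore with h | h
            · right
              refine le_trans (by nlinarith [(show (0:ℝ) ≤ (n:ℝ)^(l-1) by positivity),
                hC₁.le, (show (0:ℝ) ≤ 4*(k:ℝ) + 4*(l:ℝ) + 5 by positivity)]) h
            · left
              rw [compl_compl] at h
              refine le_trans (by nlinarith [(show (0:ℝ) ≤ (n:ℝ)^(k-1) by positivity),
                hC₁.le, (show (0:ℝ) ≤ 4*(k:ℝ) + 4*(l:ℝ) + 5 by positivity)]) h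

/-- A red/blue colouring of the edges of `K_n` is encoded by a simple graph `G` on `n`
vertices: the edges of `G` are the red edges, and the edges of the complement `Gᶜ` are
the blue edges.  Red `K_k`s are `k`-cliques of `G` and blue `K_l`s are `l`-cliques of `Gᶜ`. -/
theorem stmt0 (k l : ℕ) (hk : 1 ≤ k) (hl : 1 ≤ l) :
    ∃ C : ℝ, 0 < C ∧ ∀ (n : ℕ) (G : SimpleGraph (Fin n)),
      ((2 : ℝ) ^ (-((k : ℤ) * ((l : ℤ) - 2)) - ((k + 1).choose 2 : ℤ)) * (n.choose k : ℝ)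
          - C * (n : ℝ) ^ (k - 1) ≤ (cliqueCount G k : ℝ)) ∨
      ((2 : ℝ) ^ (-((l : ℤ) * ((k : ℤ) - 2)) - ((l + 1).choose 2 : ℤ)) * (n.choose l : ℝ)
          - C * (n : ℝ) ^ (l - 1) ≤ (cliqueCount Gᶜ l : ℝ)) := by
  obtain ⟨C, hC, hg⟩ := main_induction (k + l) k l le_rfl hk hl
  exact ⟨C, hC, fun n G => hg n G⟩
end

section
/- Let k, l ≥ 2 be natural numbers and let {t_{i,j}}_{i,j≥2} be a threshold sequence. Define N_{k,l} = max over paths P = {(a_i,b_i)}_{i=0,…,m} in Π_{k,l} of the product over i=1..m of 1/s_i. Then for every integer n ≥ N_{k,l}, any red/blue colouring of the edges of K_n contains either a red K_k or a blue K_l; in particular the Ramsey number satisfies r(k,l) ≤ ⌈N_{k,l}⌉. -/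
/-- A path in the lattice `{(i,j) : i,j ≥ 1}` to `(k,l)`: a sequence
`(a_0,b_0), …, (a_m,b_m)` with `a_0 = 1` or `b_0 = 1`, with `a_1 ≠ 1` and `b_1 ≠ 1`,
each step increasing exactly one coordinate by `1`, and ending at `(a_m,b_m) = (k,l)`. -/
structure LatticePath (k l : ℕ) where
  m : ℕ
  a : ℕ → ℕ
  b : ℕ → ℕ
  init : a 0 = 1 ∨ b 0 = 1
  second : 1 ≤ m → a 1 ≠ 1 ∧ b 1 ≠ 1
  step : ∀ i : ℕ, 1 ≤ i → i ≤ m →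
    (a i = a (i - 1) + 1 ∧ b i = b (i - 1)) ∨ (a i = a (i - 1) ∧ b i = b (i - 1) + 1)
  end_a : a m = k
  end_b : b m = l

/-- Given a threshold sequence `T` and a path `P`, the associated numbers `s_i`:
`s_i = t_{a_i,b_i}` if the `i`-th step increments `b`, and `s_i = 1 - t_{a_i,b_i}`
if it increments `a`. -/
noncomputable def pathS (T : ℕ → ℕ → ℝ) {k l : ℕ} (P : LatticePath k l) (i : ℕ) : ℝ :=
  if P.b i = P.b (i - 1) + 1 then T (P.a i) (P.b i) else 1 - T (P.a i) (P.b i)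

def Nset (T : ℕ → ℕ → ℝ) (k l : ℕ) : Set ℝ :=
  {x : ℝ | ∃ P : LatticePath k l, x = ∏ i ∈ Finset.Icc 1 P.m, (pathS T P i)⁻¹}

noncomputable def Nfun (T : ℕ → ℕ → ℝ) (k l : ℕ) : ℝ := sSup (Nset T k l)

namespace LatticePath

variable {k l : ℕ} (P : LatticePath k l)

lemma mono_le : ∀ s t : ℕ, s ≤ t → t ≤ P.m → P.a s ≤ P.a t ∧ P.b s ≤ P.b t := by
  intro s t hst htm
  induction t with
  | zero => simp_all
  | succ t ih =>
    rcases Nat.lt_or_ge s (t+1) with h | h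
    · have hs : s ≤ t := by omega
      have ih' := ih hs (by omega)
      have hstep := P.step (t+1) (by omega) htm
      simp only [Nat.add_sub_cancel] at hstep
      rcases hstep with ⟨ha, hb⟩ | ⟨ha, hb⟩ <;> constructor <;> omega
    · have : s = t + 1 := by omega
      subst this; exact ⟨le_rfl, le_rfl⟩

lemma coord_le {s : ℕ} (hs : s ≤ P.m) : P.a s ≤ k ∧ P.b s ≤ l := by
  have := P.mono_le s P.m hs le_rfl
  rw [P.end_a, P.end_b] at this
  exact this

lemma sum_eq : ∀ s : ℕ, s ≤ P.m → P.a s + P.b s = P.a 0 + P.b 0 + s := by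
  intro s hs
  induction s with
  | zero => omega
  | succ s ih =>
    have hstep := P.step (s+1) (by omega) hs
    simp only [Nat.add_sub_cancel] at hstep
    have := ih (by omega)
    omega

lemma m_le : P.m ≤ k + l := by
  have := P.sum_eq P.m le_rfl
  rw [P.end_a, P.end_b] at this
  omega

lemma one_le_m (hk : 2 ≤ k) (hl : 2 ≤ l) : 1 ≤ P.m := by
  by_contra h
  have hm : P.m = 0 := by omega
  have ha := P.end_a
  have hb := P.end_b
  rw [hm] at ha hb
  rcases P.init with h1 | h1 <;> omega

end LatticePath

lemma bddAbove_Nset (T : ℕ → ℕ → ℝ) (k l : ℕ) : BddAbove (Nset T k l) := by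
  have hne : ((Finset.Icc 0 k) ×ˢ (Finset.Icc 0 l)).Nonempty := by
    refine ⟨(0, 0), ?_⟩; simp
  set C : ℝ := ((Finset.Icc 0 k) ×ˢ (Finset.Icc 0 l)).sup' hne
      (fun p => max 1 (max |(T p.1 p.2)⁻¹| |(1 - T p.1 p.2)⁻¹|)) with hC
  have hC1 : (1:ℝ) ≤ C := by
    refine le_trans ?_ (Finset.le_sup' _ (hne.choose_spec))
    exact le_max_left _ _
  refine ⟨C ^ (k + l), ?_⟩
  rintro x ⟨P, rfl⟩
  calc (∏ i ∈ Finset.Icc 1 P.m, (pathS T P i)⁻¹)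
      ≤ |∏ i ∈ Finset.Icc 1 P.m, (pathS T P i)⁻¹| := le_abs_self _
    _ = ∏ i ∈ Finset.Icc 1 P.m, |(pathS T P i)⁻¹| := Finset.abs_prod _ _
    _ ≤ ∏ i ∈ Finset.Icc 1 P.m, C := by
        refine Finset.prod_le_prod (fun i _ => abs_nonneg _) ?_
        intro i hi
        rw [Finset.mem_Icc] at hi
        have hcoord := P.coord_le hi.2
        have hmem : (P.a i, P.b i) ∈ (Finset.Icc 0 k) ×ˢ (Finset.Icc 0 l) := by
          simp [Finset.mem_product, hcoord.1, hcoord.2]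
        refine le_trans ?_ (Finset.le_sup' _ hmem)
        unfold pathS
        split
        · exact le_trans (le_max_left _ _) (le_max_right _ _)
        · exact le_trans (le_max_right _ _) (le_max_right _ _)
    _ = C ^ (Finset.Icc 1 P.m).card := by rw [Finset.prod_const]
    _ ≤ C ^ (k + l) := by
        refine pow_le_pow_right₀ hC1 ?_
        rw [Nat.card_Icc]
        have := P.m_le
        omega

lemma single_le_prod_real {s : Finset ℕ} {f : ℕ → ℝ} (h : ∀ i ∈ s, 1 ≤ f i) {a : ℕ}
    (ha : a ∈ s) : f a ≤ ∏ i ∈ s, f i := by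
  rw [← Finset.mul_prod_erase _ _ ha]
  refine le_mul_of_one_le_right (by linarith [h a ha]) ?_
  calc (1:ℝ) = ∏ _i ∈ s.erase a, 1 := (Finset.prod_const_one).symm
    _ ≤ ∏ i ∈ s.erase a, f i :=
        Finset.prod_le_prod (fun i _ => zero_le_one)
          (fun i hi => h i (Finset.mem_of_mem_erase hi))

section RowCol

variable (T : ℕ → ℕ → ℝ)

/-- The row path `(i,1) → (i,2) → ⋯ → (i,j)`. -/
def rowPath (i j : ℕ) (hi : 2 ≤ i) (hj : 1 ≤ j) : LatticePath i j where
  m := j - 1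
  a := fun _ => i
  b := fun s => 1 + s
  init := Or.inr rfl
  second := fun _ => ⟨show i ≠ 1 by omega, show 1 + 1 ≠ 1 by omega⟩
  step := fun s hs1 _ => Or.inr ⟨rfl, show 1 + s = 1 + (s - 1) + 1 by omega⟩
  end_a := rfl
  end_b := show 1 + (j - 1) = j by omega

lemma rowPath_prod (i j : ℕ) (hi : 2 ≤ i) (hj : 1 ≤ j) :
    (∏ s ∈ Finset.Icc 1 (j - 1), (pathS T (rowPath i j hi hj) s)⁻¹)
      = ∏ s ∈ Finset.Icc 1 (j - 1), (T i (1 + s))⁻¹ := by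
  refine Finset.prod_congr rfl ?_
  intro s hs
  rw [Finset.mem_Icc] at hs
  congr 1
  unfold pathS rowPath
  simp only
  rw [if_pos (by omega)]

lemma rowPath_mem (i j : ℕ) (hi : 2 ≤ i) (hj : 1 ≤ j) :
    (∏ s ∈ Finset.Icc 1 (j - 1), (T i (1 + s))⁻¹) ∈ Nset T i j :=
  ⟨rowPath i j hi hj, (rowPath_prod T i j hi hj).symm⟩

/-- The column path `(1,j) → (2,j) → ⋯ → (i,j)`. -/
def colPath (i j : ℕ) (hi : 1 ≤ i) (hj : 2 ≤ j) : LatticePath i j where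
  m := i - 1
  a := fun s => 1 + s
  b := fun _ => j
  init := Or.inl rfl
  second := fun _ => ⟨show 1 + 1 ≠ 1 by omega, show j ≠ 1 by omega⟩
  step := fun s hs1 _ => Or.inl ⟨show 1 + s = 1 + (s - 1) + 1 by omega, rfl⟩
  end_a := show 1 + (i - 1) = i by omega
  end_b := rfl

lemma colPath_prod (i j : ℕ) (hi : 1 ≤ i) (hj : 2 ≤ j) :
    (∏ s ∈ Finset.Icc 1 (i - 1), (pathS T (colPath i j hi hj) s)⁻¹)
      = ∏ s ∈ Finset.Icc 1 (i - 1), (1 - T (1 + s) j)⁻¹ := by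
  refine Finset.prod_congr rfl ?_
  intro s hs
  rw [Finset.mem_Icc] at hs
  congr 1
  unfold pathS colPath
  simp only
  rw [if_neg (by omega)]

lemma colPath_mem (i j : ℕ) (hi : 1 ≤ i) (hj : 2 ≤ j) :
    (∏ s ∈ Finset.Icc 1 (i - 1), (1 - T (1 + s) j)⁻¹) ∈ Nset T i j :=
  ⟨colPath i j hi hj, (colPath_prod T i j hi hj).symm⟩

variable (hT : ∀ i j : ℕ, 2 ≤ i → 2 ≤ j → 0 < T i j ∧ T i j < 1)

include hT

lemma Nset_nonempty (i j : ℕ) (hi : 2 ≤ i) (hj : 2 ≤ j) : (Nset T i j).Nonempty :=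
  ⟨_, rowPath_mem T i j hi (by omega)⟩

lemma row_le (i j : ℕ) (hi : 2 ≤ i) (hj : 2 ≤ j) : (T i j)⁻¹ ≤ Nfun T i j := by
  have hmem := rowPath_mem T i j hi (by omega)
  have hfac : ∀ s ∈ Finset.Icc 1 (j - 1), (1:ℝ) ≤ (T i (1 + s))⁻¹ := by
    intro s hs
    rw [Finset.mem_Icc] at hs
    have h := hT i (1 + s) hi (by omega)
    exact one_le_inv_iff₀.mpr ⟨h.1, h.2.le⟩
  have hj1 : j - 1 ∈ Finset.Icc 1 (j - 1) := by rw [Finset.mem_Icc]; omega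
  have h1 : (T i (1 + (j - 1)))⁻¹ ≤ ∏ s ∈ Finset.Icc 1 (j - 1), (T i (1 + s))⁻¹ :=
    single_le_prod_real hfac hj1
  have hjj : 1 + (j - 1) = j := by omega
  rw [hjj] at h1
  exact le_trans h1 (le_csSup (bddAbove_Nset T i j) hmem)

lemma col_le (i j : ℕ) (hi : 2 ≤ i) (hj : 2 ≤ j) : (1 - T i j)⁻¹ ≤ Nfun T i j := by
  have hmem := colPath_mem T i j (by omega) hj
  have hfac : ∀ s ∈ Finset.Icc 1 (i - 1), (1:ℝ) ≤ (1 - T (1 + s) j)⁻¹ := by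
    intro s hs
    rw [Finset.mem_Icc] at hs
    have h := hT (1 + s) j (by omega) hj
    exact one_le_inv_iff₀.mpr ⟨by linarith, by linarith⟩
  have hi1 : i - 1 ∈ Finset.Icc 1 (i - 1) := by rw [Finset.mem_Icc]; omega
  have h1 : (1 - T (1 + (i - 1)) j)⁻¹ ≤ ∏ s ∈ Finset.Icc 1 (i - 1), (1 - T (1 + s) j)⁻¹ :=
    single_le_prod_real hfac hi1
  have hii : 1 + (i - 1) = i := by omega
  rw [hii] at h1
  exact le_trans h1 (le_csSup (bddAbove_Nset T i j) hmem)

lemma two_le_Nfun (i j : ℕ) (hi : 2 ≤ i) (hj : 2 ≤ j) : (2:ℝ) ≤ Nfun T i j := by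
  have h1 := row_le T hT i j hi hj
  have h2 := col_le T hT i j hi hj
  have ht := hT i j hi hj
  by_contra hcon
  push_neg at hcon
  have e1 : T i j * (T i j)⁻¹ = 1 := mul_inv_cancel₀ (ne_of_gt ht.1)
  have e2 : (1 - T i j) * (1 - T i j)⁻¹ = 1 := mul_inv_cancel₀ (by linarith)
  nlinarith [ht.1, ht.2]

end RowCol

namespace LatticePath

/-- Extend a path to `(i,j)` by a `b`-step to get a path to `(i,j+1)`. -/
def extB {i j : ℕ} (P : LatticePath i j) (hi : 2 ≤ i) (hj : 2 ≤ j) :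
    LatticePath i (j + 1) where
  m := P.m + 1
  a := fun s => if s ≤ P.m then P.a s else P.a P.m
  b := fun s => if s ≤ P.m then P.b s else P.b P.m + 1
  init := by simp only [if_pos (Nat.zero_le _)]; exact P.init
  second := by
    intro _
    have h1 := P.one_le_m hi hj
    simp only [if_pos h1]
    exact P.second h1
  step := by
    intro s hs1 hsm
    have hsm' : s ≤ P.m + 1 := hsm
    rcases Nat.lt_or_ge P.m s with h | h
    · have hs : s = P.m + 1 := by omega
      subst hs
      right
      refine ⟨?_, ?_⟩ <;>
        simp only [Nat.add_sub_cancel, if_neg (show ¬(P.m + 1 ≤ P.m) by omega),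
          if_pos (le_refl P.m)]
    · have hs1m : s - 1 ≤ P.m := by omega
      simp only [if_pos h, if_pos hs1m]
      exact P.step s hs1 h
  end_a := by
    simp only [if_neg (show ¬(P.m + 1 ≤ P.m) by omega)]; exact P.end_a
  end_b := by
    simp only [if_neg (show ¬(P.m + 1 ≤ P.m) by omega)]; rw [P.end_b]

/-- Extend a path to `(i,j)` by an `a`-step to get a path to `(i+1,j)`. -/
def extA {i j : ℕ} (P : LatticePath i j) (hi : 2 ≤ i) (hj : 2 ≤ j) :
    LatticePath (i + 1) j where
  m := P.m + 1
  a := fun s => if s ≤ P.m then P.a s else P.a P.m + 1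
  b := fun s => if s ≤ P.m then P.b s else P.b P.m
  init := by simp only [if_pos (Nat.zero_le _)]; exact P.init
  second := by
    intro _
    have h1 := P.one_le_m hi hj
    simp only [if_pos h1]
    exact P.second h1
  step := by
    intro s hs1 hsm
    rcases Nat.lt_or_ge P.m s with h | h
    · have hs : s = P.m + 1 := by omega
      subst hs
      left
      refine ⟨?_, ?_⟩ <;>
        simp only [Nat.add_sub_cancel, if_neg (show ¬(P.m + 1 ≤ P.m) by omega),
          if_pos (le_refl P.m)]
    · have hs1m : s - 1 ≤ P.m := by omega
      simp only [if_pos h, if_pos hs1m]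
      exact P.step s hs1 h
  end_a := by
    simp only [if_neg (show ¬(P.m + 1 ≤ P.m) by omega)]; rw [P.end_a]
  end_b := by
    simp only [if_neg (show ¬(P.m + 1 ≤ P.m) by omega)]; exact P.end_b

end LatticePath

section Ext

variable (T : ℕ → ℕ → ℝ)

lemma extB_prod {i j : ℕ} (P : LatticePath i j) (hi : 2 ≤ i) (hj : 2 ≤ j) :
    (∏ s ∈ Finset.Icc 1 (P.extB hi hj).m, (pathS T (P.extB hi hj) s)⁻¹)
      = (∏ s ∈ Finset.Icc 1 P.m, (pathS T P s)⁻¹) * (T i (j + 1))⁻¹ := by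
  have hm : (P.extB hi hj).m = P.m + 1 := rfl
  rw [hm, Finset.prod_Icc_succ_top (by omega)]
  congr 1
  · refine Finset.prod_congr rfl ?_
    intro s hs
    rw [Finset.mem_Icc] at hs
    congr 1
    unfold pathS LatticePath.extB
    simp only [if_pos hs.2, if_pos (show s - 1 ≤ P.m by omega)]
  · congr 1
    unfold pathS LatticePath.extB
    simp only [Nat.add_sub_cancel, if_neg (show ¬(P.m + 1 ≤ P.m) by omega),
      if_pos (le_refl P.m)]
    rw [if_pos trivial, P.end_a, P.end_b]

lemma extA_prod {i j : ℕ} (P : LatticePath i j) (hi : 2 ≤ i) (hj : 2 ≤ j) :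
    (∏ s ∈ Finset.Icc 1 (P.extA hi hj).m, (pathS T (P.extA hi hj) s)⁻¹)
      = (∏ s ∈ Finset.Icc 1 P.m, (pathS T P s)⁻¹) * (1 - T (i + 1) j)⁻¹ := by
  have hm : (P.extA hi hj).m = P.m + 1 := rfl
  rw [hm, Finset.prod_Icc_succ_top (by omega)]
  congr 1
  · refine Finset.prod_congr rfl ?_
    intro s hs
    rw [Finset.mem_Icc] at hs
    congr 1
    unfold pathS LatticePath.extA
    simp only [if_pos hs.2, if_pos (show s - 1 ≤ P.m by omega)]
  · congr 1
    unfold pathS LatticePath.extA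
    simp only [Nat.add_sub_cancel, if_neg (show ¬(P.m + 1 ≤ P.m) by omega),
      if_pos (le_refl P.m)]
    rw [if_neg (by omega), P.end_a, P.end_b]

variable (hT : ∀ i j : ℕ, 2 ≤ i → 2 ≤ j → 0 < T i j ∧ T i j < 1)

include hT

lemma ext_b_le (i j : ℕ) (hi : 2 ≤ i) (hj : 2 ≤ j) :
    Nfun T i j ≤ T i (j + 1) * Nfun T i (j + 1) := by
  have hu := (hT i (j + 1) hi (by omega)).1
  refine csSup_le (Nset_nonempty T hT i j hi hj) ?_
  rintro x ⟨P, rfl⟩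
  have hmem : (∏ s ∈ Finset.Icc 1 P.m, (pathS T P s)⁻¹) * (T i (j + 1))⁻¹
      ∈ Nset T i (j + 1) := ⟨P.extB hi hj, (extB_prod T P hi hj).symm⟩
  have hle := le_csSup (bddAbove_Nset T i (j + 1)) hmem
  have hx : (∏ s ∈ Finset.Icc 1 P.m, (pathS T P s)⁻¹)
      = T i (j + 1) * ((∏ s ∈ Finset.Icc 1 P.m, (pathS T P s)⁻¹) * (T i (j + 1))⁻¹) := by
    rw [mul_comm (T i (j + 1)) _, mul_assoc, inv_mul_cancel₀ (ne_of_gt hu), mul_one]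
  rw [hx]
  exact mul_le_mul_of_nonneg_left hle hu.le

lemma ext_a_le (i j : ℕ) (hi : 2 ≤ i) (hj : 2 ≤ j) :
    Nfun T i j ≤ (1 - T (i + 1) j) * Nfun T (i + 1) j := by
  have hu := hT (i + 1) j (by omega) hj
  have hu1 : (0:ℝ) < 1 - T (i + 1) j := by linarith [hu.2]
  refine csSup_le (Nset_nonempty T hT i j hi hj) ?_
  rintro x ⟨P, rfl⟩
  have hmem : (∏ s ∈ Finset.Icc 1 P.m, (pathS T P s)⁻¹) * (1 - T (i + 1) j)⁻¹
      ∈ Nset T (i + 1) j := ⟨P.extA hi hj, (extA_prod T P hi hj).symm⟩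
  have hle := le_csSup (bddAbove_Nset T (i + 1) j) hmem
  have hx : (∏ s ∈ Finset.Icc 1 P.m, (pathS T P s)⁻¹)
      = (1 - T (i + 1) j) * ((∏ s ∈ Finset.Icc 1 P.m, (pathS T P s)⁻¹)
          * (1 - T (i + 1) j)⁻¹) := by
    rw [mul_comm (1 - T (i + 1) j) _, mul_assoc, inv_mul_cancel₀ (ne_of_gt hu1), mul_one]
  rw [hx]
  exact mul_le_mul_of_nonneg_left hle hu1.le

lemma row_ge (j : ℕ) (hj : 2 ≤ j) : (j : ℝ) ≤ Nfun T 2 j := by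
  induction j, hj using Nat.le_induction with
  | base => exact_mod_cast two_le_Nfun T hT 2 2 le_rfl le_rfl
  | succ j hj IH =>
    have hu := hT 2 (j + 1) le_rfl (by omega)
    have h1 : (1 - T 2 (j + 1))⁻¹ ≤ Nfun T 2 (j + 1) := col_le T hT 2 (j + 1) le_rfl (by omega)
    have h2 : Nfun T 2 j ≤ T 2 (j + 1) * Nfun T 2 (j + 1) := ext_b_le T hT 2 j le_rfl hj
    by_contra hcon
    push_neg at hcon
    have hN0 : (0:ℝ) < Nfun T 2 (j + 1) := by
      have := two_le_Nfun T hT 2 (j + 1) le_rfl (by omega); linarith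
    have e2 : (1 - T 2 (j + 1)) * (1 - T 2 (j + 1))⁻¹ = 1 :=
      mul_inv_cancel₀ (by linarith [hu.2])
    have hjc : (j:ℝ) ≤ Nfun T 2 j := IH
    push_cast at hcon
    nlinarith [hu.1, hu.2]

lemma col_ge (i : ℕ) (hi : 2 ≤ i) : (i : ℝ) ≤ Nfun T i 2 := by
  induction i, hi using Nat.le_induction with
  | base => exact_mod_cast two_le_Nfun T hT 2 2 le_rfl le_rfl
  | succ i hi IH =>
    have hu := hT (i + 1) 2 (by omega) le_rfl
    have h1 : (T (i + 1) 2)⁻¹ ≤ Nfun T (i + 1) 2 := row_le T hT (i + 1) 2 (by omega) le_rfl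
    have h2 : Nfun T i 2 ≤ (1 - T (i + 1) 2) * Nfun T (i + 1) 2 := ext_a_le T hT i 2 hi le_rfl
    by_contra hcon
    push_neg at hcon
    have hN0 : (0:ℝ) < Nfun T (i + 1) 2 := by
      have := two_le_Nfun T hT (i + 1) 2 (by omega) le_rfl; linarith
    have e2 : T (i + 1) 2 * (T (i + 1) 2)⁻¹ = 1 := mul_inv_cancel₀ (ne_of_gt hu.1)
    push_cast at hcon
    nlinarith [hu.1, hu.2]

lemma add_le_Nfun (i j : ℕ) (hi : 3 ≤ i) (hj : 3 ≤ j) :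
    Nfun T (i - 1) j + Nfun T i (j - 1) ≤ Nfun T i j := by
  have h1 : Nfun T (i - 1) j ≤ (1 - T (i - 1 + 1) j) * Nfun T (i - 1 + 1) j :=
    ext_a_le T hT (i - 1) j (by omega) (by omega)
  have h2 : Nfun T i (j - 1) ≤ T i (j - 1 + 1) * Nfun T i (j - 1 + 1) :=
    ext_b_le T hT i (j - 1) (by omega) (by omega)
  have hii : i - 1 + 1 = i := by omega
  have hjj : j - 1 + 1 = j := by omega
  rw [hii] at h1
  rw [hjj] at h2
  nlinarith [h1, h2]

end Ext

section Graph

lemma clique_map_of_comap {α β : Type*} (G : SimpleGraph β) (f : α ↪ β) {c : ℕ}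
    {s : Finset α} (h : (SimpleGraph.comap f G).IsNClique c s) :
    G.IsNClique c (s.map f) := by
  constructor
  · intro x hx y hy hxy
    rw [Finset.coe_map, Set.mem_image] at hx hy
    obtain ⟨x', hx', rfl⟩ := hx
    obtain ⟨y', hy', rfl⟩ := hy
    exact h.1 hx' hy' (fun he => hxy (congrArg f he))
  · rw [Finset.card_map]; exact h.2

lemma compl_comap {α β : Type*} (G : SimpleGraph β) (f : α ↪ β) :
    (SimpleGraph.comap f G)ᶜ = SimpleGraph.comap f Gᶜ := by
  ext u v
  simp only [SimpleGraph.compl_adj, SimpleGraph.comap_adj, f.injective.ne_iff]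

lemma step_lemma {n : ℕ} (G : SimpleGraph (Fin n)) (v : Fin n) (R : Finset (Fin n))
    (hR : ∀ u ∈ R, G.Adj v u) {c d : ℕ}
    (IH : ∀ G' : SimpleGraph (Fin R.card),
      (∃ s, G'.IsNClique c s) ∨ (∃ s, G'ᶜ.IsNClique d s)) :
    (∃ s : Finset (Fin n), G.IsNClique (c + 1) s) ∨
      (∃ s : Finset (Fin n), Gᶜ.IsNClique d s) := by
  let e := R.orderIsoOfFin rfl
  let f : Fin R.card ↪ Fin n :=
    ⟨fun x => (e x : Fin n), fun x y h => e.injective (Subtype.ext h)⟩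
  have hf : ∀ x, f x ∈ R := fun x => (e x).2
  rcases IH (SimpleGraph.comap f G) with ⟨s, hs⟩ | ⟨s, hs⟩
  · left
    have hmap := clique_map_of_comap G f hs
    have hv : v ∉ s.map f := by
      intro hv
      rw [Finset.mem_map] at hv
      obtain ⟨x, _, hfx⟩ := hv
      exact G.loopless.irrefl v (hfx ▸ hR (f x) (hf x))
    refine ⟨insert v (s.map f), ?_, ?_⟩
    · intro x hx y hy hxy
      rcases Finset.mem_insert.mp (by exact_mod_cast hx) with rfl | hx' <;>
        rcases Finset.mem_insert.mp (by exact_mod_cast hy) with rfl | hy'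
      · exact absurd rfl hxy
      · rw [Finset.mem_map] at hy'
        obtain ⟨y', hy', rfl⟩ := hy'
        exact hR (f y') (hf y')
      · rw [Finset.mem_map] at hx'
        obtain ⟨x', hx', rfl⟩ := hx'
        exact (hR (f x') (hf x')).symm
      · exact hmap.1 hx' hy' hxy
    · rw [Finset.card_insert_of_notMem hv, Finset.card_map, hs.2]
  · right
    rw [compl_comap] at hs
    exact ⟨s.map f, clique_map_of_comap Gᶜ f hs⟩

end Graph

lemma main_lemma (T : ℕ → ℕ → ℝ)
    (hT : ∀ i j : ℕ, 2 ≤ i → 2 ≤ j → 0 < T i j ∧ T i j < 1) :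
    ∀ S : ℕ, ∀ i j : ℕ, 2 ≤ i → 2 ≤ j → i + j ≤ S → ∀ n : ℕ,
      Nfun T i j - 1 < (n : ℝ) → ∀ G : SimpleGraph (Fin n),
      (∃ t : Finset (Fin n), G.IsNClique i t) ∨
        (∃ t : Finset (Fin n), Gᶜ.IsNClique j t) := by
  intro S
  induction S with
  | zero => intro i j hi hj hS; omega
  | succ S IH =>
    intro i j hi hj hS n hn G
    by_cases hi2 : i = 2
    · -- base case i = 2
      subst hi2
      have hjN : (j : ℝ) ≤ Nfun T 2 j := row_ge T hT j hj
      have hnj : j ≤ n := by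
        by_contra hcon
        push_neg at hcon
        have : (n : ℝ) ≤ (j : ℝ) - 1 := by
          have : (n : ℕ) + 1 ≤ j := hcon
          have := (Nat.cast_le (α := ℝ)).mpr this
          push_cast at this
          linarith
        linarith
      by_cases he : ∃ u w : Fin n, G.Adj u w
      · obtain ⟨u, w, huw⟩ := he
        left
        refine ⟨{u, w}, ?_, ?_⟩
        · intro x hx y hy hxy
          simp only [Finset.coe_insert, Set.mem_insert_iff, Finset.coe_singleton,
            Set.mem_singleton_iff] at hx hy
          rcases hx with rfl | rfl <;> rcases hy with rfl | rfl
          · exact absurd rfl hxy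
          · exact huw
          · exact huw.symm
          · exact absurd rfl hxy
        · rw [Finset.card_insert_of_notMem (by simpa using huw.ne), Finset.card_singleton]
      · push_neg at he
        right
        obtain ⟨t, _, htc⟩ := Finset.exists_subset_card_eq (s := (Finset.univ : Finset (Fin n))) (n := j)
          (by simpa using hnj)
        refine ⟨t, ?_, htc⟩
        intro x _ y _ hxy
        exact ⟨hxy, he x y⟩
    · by_cases hj2 : j = 2
      · -- base case j = 2
        subst hj2
        have hiN : (i : ℝ) ≤ Nfun T i 2 := col_ge T hT i hi
        have hni : i ≤ n := by
          by_contra hcon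
          push_neg at hcon
          have : (n : ℕ) + 1 ≤ i := hcon
          have := (Nat.cast_le (α := ℝ)).mpr this
          push_cast at this
          linarith
        by_cases he : ∃ u w : Fin n, Gᶜ.Adj u w
        · obtain ⟨u, w, huw⟩ := he
          right
          refine ⟨{u, w}, ?_, ?_⟩
          · intro x hx y hy hxy
            simp only [Finset.coe_insert, Set.mem_insert_iff, Finset.coe_singleton,
              Set.mem_singleton_iff] at hx hy
            rcases hx with rfl | rfl <;> rcases hy with rfl | rfl
            · exact absurd rfl hxy
            · exact huw
            · exact huw.symm
            · exact absurd rfl hxy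
          · rw [Finset.card_insert_of_notMem (by simpa using huw.ne), Finset.card_singleton]
        · push_neg at he
          left
          obtain ⟨t, _, htc⟩ := Finset.exists_subset_card_eq (s := (Finset.univ : Finset (Fin n))) (n := i)
            (by simpa using hni)
          refine ⟨t, ?_, htc⟩
          intro x _ y _ hxy
          by_contra hadj
          exact he x y ⟨hxy, hadj⟩
      · -- interior case: i, j ≥ 3
        classical
        have hi3 : 3 ≤ i := by omega
        have hj3 : 3 ≤ j := by omega
        have hA2 : (2:ℝ) ≤ Nfun T (i - 1) j := two_le_Nfun T hT (i - 1) j (by omega) hj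
        have hB2 : (2:ℝ) ≤ Nfun T i (j - 1) := two_le_Nfun T hT i (j - 1) hi (by omega)
        have hAB : Nfun T (i - 1) j + Nfun T i (j - 1) ≤ Nfun T i j :=
          add_le_Nfun T hT i j hi3 hj3
        have hn1 : 1 ≤ n := by
          by_contra hcon
          push_neg at hcon
          have : n = 0 := by omega
          subst this
          simp only [Nat.cast_zero] at hn
          linarith
        set v : Fin n := ⟨0, hn1⟩ with hv
        set R : Finset (Fin n) := Finset.univ.filter (fun u => G.Adj v u) with hRdef
        set Bl : Finset (Fin n) := Finset.univ.filter (fun u => Gᶜ.Adj v u) with hBldef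
        have hRadj : ∀ u ∈ R, G.Adj v u := by
          intro u hu; rw [hRdef, Finset.mem_filter] at hu; exact hu.2
        have hBladj : ∀ u ∈ Bl, Gᶜ.Adj v u := by
          intro u hu; rw [hBldef, Finset.mem_filter] at hu; exact hu.2
        have hvR : v ∉ R := by
          rw [hRdef, Finset.mem_filter]
          exact fun h => G.loopless.irrefl v h.2
        have hBleq : Bl = Finset.univ \ insert v R := by
          ext u
          simp only [hBldef, hRdef, Finset.mem_filter, Finset.mem_univ, true_and,
            Finset.mem_sdiff, Finset.mem_insert, SimpleGraph.compl_adj]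
          constructor
          · rintro ⟨h1, h2⟩
            push_neg
            exact ⟨fun he => h1 he.symm, h2⟩
          · intro h
            push_neg at h
            exact ⟨fun he => h.1 he.symm, h.2⟩
        have hsub : insert v R ⊆ Finset.univ := Finset.subset_univ _
        have hcards : R.card + Bl.card + 1 = n := by
          rw [hBleq, Finset.card_sdiff_of_subset hsub, Finset.card_insert_of_notMem hvR]
          have h1 : R.card + 1 ≤ n := by
            have := Finset.card_le_card hsub
            rwa [Finset.card_insert_of_notMem hvR, Finset.card_univ, Fintype.card_fin] at this
          rw [Finset.card_univ, Fintype.card_fin]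
          omega
        have hcardsR : ((R.card : ℝ) + (Bl.card : ℝ) + 1) = (n : ℝ) := by
          exact_mod_cast congrArg (Nat.cast (R := ℝ)) hcards
        by_cases hAc : Nfun T (i - 1) j - 1 < (R.card : ℝ)
        · have IH' : ∀ G' : SimpleGraph (Fin R.card),
              (∃ t, G'.IsNClique (i - 1) t) ∨ (∃ t, G'ᶜ.IsNClique j t) :=
            fun G' => IH (i - 1) j (by omega) hj (by omega) R.card hAc G'
          have hstep := step_lemma G v R hRadj IH'
          have hii : i - 1 + 1 = i := by omega
          rw [hii] at hstep
          exact hstep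
        · push_neg at hAc
          have hBc : Nfun T i (j - 1) - 1 < (Bl.card : ℝ) := by linarith
          have IH' : ∀ G' : SimpleGraph (Fin Bl.card),
              (∃ t, G'.IsNClique (j - 1) t) ∨ (∃ t, G'ᶜ.IsNClique i t) := by
            intro G'
            rcases IH i (j - 1) hi (by omega) (by omega) Bl.card hBc G'ᶜ with h | h
            · right; exact h
            · left; rwa [compl_compl] at h
          have hstep := step_lemma Gᶜ v Bl hBladj IH'
          have hjj : j - 1 + 1 = j := by omega
          rw [hjj, compl_compl] at hstep
          exact hstep.symm


/-- The Erdős–Szekeres-type Ramsey bound (Section 5 of the paper).  A red/blue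
colouring of `K_n` is encoded by a graph `G` (red edges) and `Gᶜ` (blue edges).
With `N_{k,l} = max_{P ∈ Π_{k,l}} ∏ 1/s_i`, every colouring of `K_n` with `n ≥ N_{k,l}`
contains a red `K_k` or a blue `K_l`; in particular `r(k,l) ≤ ⌈N_{k,l}⌉`, where
`r(k,l)` is the least `n` such that every colouring of `K_n` contains a red `K_k` or a
blue `K_l`. -/
theorem stmt10 (k l : ℕ) (hk : 2 ≤ k) (hl : 2 ≤ l) (T : ℕ → ℕ → ℝ)
    (hT : ∀ i j : ℕ, 2 ≤ i → 2 ≤ j → 0 < T i j ∧ T i j < 1)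
    (hTsymm : ∀ i j : ℕ, 2 ≤ i → 2 ≤ j → T j i = 1 - T i j) :
    (∀ n : ℕ,
        sSup {x : ℝ | ∃ P : LatticePath k l,
          x = ∏ i ∈ Finset.Icc 1 P.m, (pathS T P i)⁻¹} ≤ (n : ℝ) →
        ∀ G : SimpleGraph (Fin n),
          (∃ s : Finset (Fin n), G.IsNClique k s) ∨
          (∃ s : Finset (Fin n), Gᶜ.IsNClique l s)) ∧
    sInf {n : ℕ | ∀ G : SimpleGraph (Fin n),
        (∃ s : Finset (Fin n), G.IsNClique k s) ∨ (∃ s : Finset (Fin n), Gᶜ.IsNClique l s)}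
      ≤ ⌈sSup {x : ℝ | ∃ P : LatticePath k l,
          x = ∏ i ∈ Finset.Icc 1 P.m, (pathS T P i)⁻¹}⌉₊ := by
  have hmain := main_lemma T hT (k + l) k l hk hl le_rfl
  have hsup_eq : sSup {x : ℝ | ∃ P : LatticePath k l,
      x = ∏ i ∈ Finset.Icc 1 P.m, (pathS T P i)⁻¹} = Nfun T k l := rfl
  constructor
  · intro n hsup G
    rw [hsup_eq] at hsup
    exact hmain n (by linarith) G
  · apply Nat.sInf_le
    rw [hsup_eq]
    intro G
    refine hmain ⌈Nfun T k l⌉₊ ?_ G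
    have := Nat.le_ceil (Nfun T k l)
    linarith
end

section
/- For all integers k, l ≥ 1, every red/blue colouring of the edges of the complete graph on binom(k+l, k) vertices contains a red K_k or a blue K_l; that is, r(k,l) ≤ binom(k+l, k). -/
lemma ramsey_aux : ∀ n k l : ℕ, k + l = n → 1 ≤ k → 1 ≤ l →
    ∀ {V : Type} (G : SimpleGraph V) (A : Finset V),
      (k + l).choose k ≤ A.card →
      (∃ s ⊆ A, G.IsNClique k s) ∨ (∃ s ⊆ A, Gᶜ.IsNClique l s) := by
  intro n
  induction n using Nat.strong_induction_on with
  | _ n IH =>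
    intro k l hn hk hl V G A hA
    classical
    have hApos : A.Nonempty := by
      rw [← Finset.card_pos]
      exact lt_of_lt_of_le (Nat.choose_pos (Nat.le_add_right _ _)) hA
    rcases eq_or_lt_of_le hk with hk1 | hk2
    · obtain ⟨v, hv⟩ := hApos
      exact Or.inl ⟨{v}, by simpa using hv, by rw [← hk1]; exact (SimpleGraph.isNClique_one).2 ⟨v, rfl⟩⟩
    rcases eq_or_lt_of_le hl with hl1 | hl2
    · obtain ⟨v, hv⟩ := hApos
      exact Or.inr ⟨{v}, by simpa using hv, by rw [← hl1]; exact (SimpleGraph.isNClique_one).2 ⟨v, rfl⟩⟩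
    obtain ⟨k', rfl⟩ : ∃ k', k = k' + 1 := ⟨k - 1, by omega⟩
    obtain ⟨l', rfl⟩ : ∃ l', l = l' + 1 := ⟨l - 1, by omega⟩
    obtain ⟨v, hv⟩ := hApos
    set N := (A.erase v).filter (fun w => G.Adj v w) with hNdef
    set M := (A.erase v).filter (fun w => ¬ G.Adj v w) with hMdef
    have hNM : N.card + M.card = A.card - 1 := by
      rw [hNdef, hMdef, Finset.card_filter_add_card_filter_not,
        Finset.card_erase_of_mem hv]
    have pascal : (k' + 1 + (l' + 1)).choose (k' + 1)
        = (k' + (l' + 1)).choose k' + ((k' + 1) + l').choose (k' + 1) := by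
      have e1 : k' + 1 + (l' + 1) = (k' + l' + 1) + 1 := by omega
      have e2 : k' + (l' + 1) = k' + l' + 1 := by omega
      have e3 : (k' + 1) + l' = k' + l' + 1 := by omega
      rw [e1, e2, e3]
      exact Nat.choose_succ_succ _ _
    have key : (k' + (l' + 1)).choose k' ≤ N.card ∨ ((k' + 1) + l').choose (k' + 1) ≤ M.card := by
      by_contra h
      push_neg at h
      have c1 : 0 < (k' + (l' + 1)).choose k' := Nat.choose_pos (by omega)
      have c2 : 0 < ((k' + 1) + l').choose (k' + 1) := Nat.choose_pos (by omega)
      omega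
    rcases key with hkey | hkey
    · rcases IH (k' + (l' + 1)) (by omega) k' (l' + 1) rfl (by omega) (by omega) G N hkey with
        ⟨s, hsN, hs⟩ | ⟨s, hsN, hs⟩
      · left
        have hvs : v ∉ s := fun h => Finset.notMem_erase v A
          (Finset.mem_of_mem_filter v (hsN h))
        refine ⟨insert v s, ?_, hs.insert ?_⟩
        · exact Finset.insert_subset hv (hsN.trans ((Finset.filter_subset _ _).trans
            (Finset.erase_subset _ _)))
        · intro b hb
          exact (Finset.mem_filter.1 (hsN hb)).2
      · exact Or.inr ⟨s, hsN.trans ((Finset.filter_subset _ _).trans (Finset.erase_subset _ _)), hs⟩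
    · rcases IH ((k' + 1) + l') (by omega) (k' + 1) l' rfl (by omega) (by omega) G M hkey with
        ⟨s, hsM, hs⟩ | ⟨s, hsM, hs⟩
      · exact Or.inl ⟨s, hsM.trans ((Finset.filter_subset _ _).trans (Finset.erase_subset _ _)), hs⟩
      · right
        refine ⟨insert v s, ?_, hs.insert ?_⟩
        · exact Finset.insert_subset hv (hsM.trans ((Finset.filter_subset _ _).trans
            (Finset.erase_subset _ _)))
        · intro b hb
          have hb' := Finset.mem_filter.1 (hsM hb)
          have hbv : v ≠ b := fun h => Finset.notMem_erase v A (h ▸ hb'.1)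
          exact (SimpleGraph.compl_adj G v b).2 ⟨hbv, hb'.2⟩

/-- The Erdős–Szekeres bound `r(k,l) ≤ binom(k+l,k)` for `k, l ≥ 1`: every red/blue
colouring of the edges of the complete graph on `binom(k+l,k)` vertices (encoded by a
graph `G` of red edges, with blue edges those of `Gᶜ`) contains a red `K_k` or a blue
`K_l`; consequently the Ramsey number `r(k,l)`, the least `n` such that every colouring
of `K_n` contains a red `K_k` or a blue `K_l`, is at most `binom(k+l,k)`. -/
theorem stmt12 (k l : ℕ) (hk : 1 ≤ k) (hl : 1 ≤ l) :
    (∀ G : SimpleGraph (Fin ((k + l).choose k)),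
      (∃ s : Finset (Fin ((k + l).choose k)), G.IsNClique k s) ∨
      (∃ s : Finset (Fin ((k + l).choose k)), Gᶜ.IsNClique l s)) ∧
    sInf {n : ℕ | ∀ G : SimpleGraph (Fin n),
        (∃ s : Finset (Fin n), G.IsNClique k s) ∨ (∃ s : Finset (Fin n), Gᶜ.IsNClique l s)}
      ≤ (k + l).choose k := by
  have main : ∀ G : SimpleGraph (Fin ((k + l).choose k)),
      (∃ s : Finset (Fin ((k + l).choose k)), G.IsNClique k s) ∨
      (∃ s : Finset (Fin ((k + l).choose k)), Gᶜ.IsNClique l s) := by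
    intro G
    have := ramsey_aux (k + l) k l rfl hk hl G Finset.univ (by simp)
    rcases this with ⟨s, _, hs⟩ | ⟨s, _, hs⟩
    · exact Or.inl ⟨s, hs⟩
    · exact Or.inr ⟨s, hs⟩
  exact ⟨main, Nat.sInf_le main⟩
end

section
/- For every integer t ≥ 1, the sequence c_t(n) = k_t(n)/binom(n,t) is nondecreasing in n: for all n ≥ t, k_t(n)/binom(n,t) ≤ k_t(n+1)/binom(n+1,t). -/
/-- `kt n t` is the minimum of `k_t(G) + k_t(Gᶜ)` over all graphs `G` on `n` vertices,
i.e. the minimum number of monochromatic `K_t`s in a two-colouring of the edges of `K_n`. -/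
noncomputable def kt (n t : ℕ) : ℕ :=
  sInf {m : ℕ | ∃ G : SimpleGraph (Fin n), cliqueCount G t + cliqueCount Gᶜ t = m}

/-- `ctn t n = k_t(n) / binom(n,t)`. -/
noncomputable def ctn (t n : ℕ) : ℝ := (kt n t : ℝ) / (n.choose t : ℝ)

open Finset

section aux


/-- number of t-cliques of G avoiding vertex v -/
noncomputable def avCount {n : ℕ} (G : SimpleGraph (Fin n)) (t : ℕ) (v : Fin n) : ℕ :=
  {s : Finset (Fin n) | G.IsNClique t s ∧ v ∉ s}.ncard

lemma kt_le {n t : ℕ} (G : SimpleGraph (Fin n)) :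
    kt n t ≤ cliqueCount G t + cliqueCount Gᶜ t :=
  Nat.sInf_le ⟨G, rfl⟩

lemma kt_exists (n t : ℕ) :
    ∃ G : SimpleGraph (Fin n), cliqueCount G t + cliqueCount Gᶜ t = kt n t := by
  have h : {m : ℕ | ∃ G : SimpleGraph (Fin n), cliqueCount G t + cliqueCount Gᶜ t = m}.Nonempty :=
    ⟨_, ⊥, rfl⟩
  exact Nat.sInf_mem h

lemma isNClique_comap_iff {n : ℕ} (G : SimpleGraph (Fin (n+1))) (f : Fin n ↪ Fin (n+1))
    (t : ℕ) (s : Finset (Fin n)) :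
    (G.comap f).IsNClique t s ↔ G.IsNClique t (s.map f) := by
  simp only [SimpleGraph.isNClique_iff, Finset.card_map, and_congr_left_iff]
  intro _
  constructor
  · intro h a ha b hb hab
    simp only [Finset.coe_map, Set.mem_image, Finset.mem_coe] at ha hb
    obtain ⟨a, ha, rfl⟩ := ha
    obtain ⟨b, hb, rfl⟩ := hb
    exact h ha hb (fun e => hab (by rw [e]))
  · intro h a ha b hb hab
    exact h (Finset.mem_coe.2 (Finset.mem_map_of_mem f ha))
      (Finset.mem_coe.2 (Finset.mem_map_of_mem f hb)) (fun e => hab (f.injective e))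

lemma comap_count {n t : ℕ} (G : SimpleGraph (Fin (n+1))) (v : Fin (n+1)) :
    cliqueCount (G.comap v.succAboveEmb) t = avCount G t v := by
  rw [cliqueCount, avCount]
  have himg : {s : Finset (Fin (n+1)) | G.IsNClique t s ∧ v ∉ s}
      = (fun s : Finset (Fin n) => s.map v.succAboveEmb) ''
        {s : Finset (Fin n) | (G.comap v.succAboveEmb).IsNClique t s} := by
    ext s
    simp only [Set.mem_image, Set.mem_setOf_eq]
    constructor
    · rintro ⟨hs, hv⟩
      have : ∀ x ∈ s, ∃ z, v.succAbove z = x := fun x hx =>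
        Fin.exists_succAbove_eq (fun e => hv (e ▸ hx))
      choose g hg using this
      refine ⟨(s.attach).image (fun x => g x.1 x.2), ?_, ?_⟩
      · rw [isNClique_comap_iff]
        convert hs using 1
        ext y
        simp only [Finset.mem_map, Finset.mem_image, Finset.mem_attach, true_and,
          Subtype.exists, Fin.succAboveEmb_apply]
        constructor
        · rintro ⟨z, ⟨x, hx, rfl⟩, rfl⟩
          rw [hg x hx]; exact hx
        · intro hy
          exact ⟨g y hy, ⟨y, hy, rfl⟩, hg y hy⟩
      · ext y
        simp only [Finset.mem_map, Finset.mem_image, Finset.mem_attach, true_and,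
          Subtype.exists, Fin.succAboveEmb_apply]
        constructor
        · rintro ⟨z, ⟨x, hx, rfl⟩, rfl⟩
          rw [hg x hx]; exact hx
        · intro hy
          exact ⟨g y hy, ⟨y, hy, rfl⟩, hg y hy⟩
    · rintro ⟨s', hs', rfl⟩
      rw [isNClique_comap_iff] at hs'
      refine ⟨hs', ?_⟩
      simp only [Finset.mem_map, Fin.succAboveEmb_apply]
      rintro ⟨a, -, ha⟩
      exact Fin.succAbove_ne v a ha
  rw [himg, Set.ncard_image_of_injective _ (Finset.map_injective _)]

lemma comap_compl {n : ℕ} (G : SimpleGraph (Fin (n+1))) (f : Fin n ↪ Fin (n+1)) :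
    (G.comap f)ᶜ = Gᶜ.comap f := by
  ext a b
  simp [f.injective.ne_iff]

open Classical in
lemma double_count {n t : ℕ} (G : SimpleGraph (Fin (n+1))) :
    ∑ v : Fin (n+1), avCount G t v = (n + 1 - t) * cliqueCount G t := by
  have h1 : ∀ v : Fin (n+1), avCount G t v =
      ((univ.filter fun s : Finset (Fin (n+1)) => G.IsNClique t s).filter (fun s => v ∉ s)).card := by
    intro v
    rw [avCount, Set.ncard_eq_toFinset_card', Set.toFinset_setOf, Finset.filter_filter]
  have h2 : cliqueCount G t
      = (univ.filter fun s : Finset (Fin (n+1)) => G.IsNClique t s).card := by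
    rw [cliqueCount, Set.ncard_eq_toFinset_card', Set.toFinset_setOf]
  simp only [h1, h2, Finset.card_filter]
  rw [Finset.sum_comm]
  have h3 : ∀ s ∈ (univ.filter fun s : Finset (Fin (n+1)) => G.IsNClique t s),
      (∑ x : Fin (n+1), if x ∉ s then 1 else 0) = n + 1 - t := by
    intro s hs
    simp only [mem_filter, mem_univ, true_and] at hs
    rw [← Finset.card_filter]
    have : (univ.filter fun x => x ∉ s) = sᶜ := by ext x; simp
    rw [this, Finset.card_compl, hs.2]
    simp
  rw [Finset.sum_congr rfl h3, Finset.sum_const, smul_eq_mul, Nat.mul_comm, Finset.card_filter]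

lemma key_ineq {n t : ℕ} :
    (n + 1) * kt n t ≤ (n + 1 - t) * kt (n+1) t := by
  obtain ⟨G, hG⟩ := kt_exists (n+1) t
  have hv : ∀ v : Fin (n+1), kt n t ≤ avCount G t v + avCount Gᶜ t v := by
    intro v
    calc kt n t ≤ cliqueCount (G.comap v.succAboveEmb) t
          + cliqueCount (G.comap v.succAboveEmb)ᶜ t := kt_le _
      _ = _ := by rw [comap_compl, comap_count, comap_count]
  calc (n + 1) * kt n t = ∑ _v : Fin (n+1), kt n t := by
        simp [Finset.sum_const, Finset.card_univ]
    _ ≤ ∑ v : Fin (n+1), (avCount G t v + avCount Gᶜ t v) :=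
        Finset.sum_le_sum (fun v _ => hv v)
    _ = (n + 1 - t) * cliqueCount G t + (n + 1 - t) * cliqueCount Gᶜ t := by
        rw [Finset.sum_add_distrib, double_count, double_count]
    _ = (n + 1 - t) * kt (n+1) t := by rw [← Nat.mul_add, hG]

end aux

/-- The sequence `c_t(n) = k_t(n)/binom(n,t)` is nondecreasing in `n` for `n ≥ t`. -/
theorem stmt13 (t : ℕ) (ht : 1 ≤ t) (n : ℕ) (hn : t ≤ n) :
    ctn t n ≤ ctn t (n + 1) := by
  have hpos : (0:ℝ) < (n.choose t : ℝ) := by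
    exact_mod_cast Nat.choose_pos hn
  have hpos' : (0:ℝ) < ((n+1).choose t : ℝ) := by
    exact_mod_cast Nat.choose_pos (hn.trans (Nat.le_succ n))
  rw [ctn, ctn, div_le_div_iff₀ hpos hpos']
  have key := key_ineq (t := t) (n := n)
  have hnat : kt n t * (n+1).choose t ≤ kt (n+1) t * n.choose t := by
    have hd : 0 < n + 1 - t := by omega
    apply Nat.le_of_mul_le_mul_right _ hd
    calc kt n t * (n+1).choose t * (n + 1 - t)
        = kt n t * ((n+1).choose t * (n + 1 - t)) := by ring
      _ = kt n t * (n.choose t * (n + 1)) := by rw [← Nat.choose_mul_succ_eq]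
      _ = ((n + 1) * kt n t) * n.choose t := by ring
      _ ≤ ((n + 1 - t) * kt (n+1) t) * n.choose t := Nat.mul_le_mul_right _ key
      _ = kt (n+1) t * n.choose t * (n + 1 - t) := by ring
  exact_mod_cast hnat
end
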